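/- arXiv:1302.0359 — 8 statements merged into one kernel-verified Lean document; each statement's English description precedes it below -/
import Mathlib

section
/- Let m ≥ 1 be an integer and let q be a power of 2. Then q^m < M_m(q) ≤ (q^{m+1} - 1)/(q - 1). -/
private lemma hxy (q a b : ℕ) (hq : 1 ≤ q) : q ^ a + q ^ b ≤ q ^ (a + b) + 1 := by
  have h1 : 1 ≤ q ^ a := Nat.one_le_pow _ _ hq
  have h2 : 1 ≤ q ^ b := Nat.one_le_pow _ _ hq
  have h3 : q ^ (a + b) = q ^ a * q ^ b := pow_add q a b
  nlinarith
private lemma sumpow (q A B m : ℕ) (hq : 2 ≤ q) (hA : 2 ≤ A) (hB : 2 ≤ B)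
    (hab : A + B = m + 1) : q ^ A + q ^ B + q ≤ q ^ m + 2 := by
  obtain ⟨a, rfl⟩ : ∃ a, A = a + 2 := ⟨A - 2, by omega⟩
  obtain ⟨b, rfl⟩ : ∃ b, B = b + 2 := ⟨B - 2, by omega⟩
  obtain rfl : m = a + b + 3 := by omega
  have key : q ^ (a + 2) + q ^ (b + 2) ≤ q ^ (a + b + 2) + q ^ 2 := by
    calc q ^ (a + 2) + q ^ (b + 2) = (q ^ a + q ^ b) * q ^ 2 := by ring
    _ ≤ (q ^ (a + b) + 1) * q ^ 2 := Nat.mul_le_mul_right _ (hxy q a b (by omega))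
    _ = q ^ (a + b + 2) + q ^ 2 := by ring
  -- q^(a+b+3) + 2 ≥ q^(a+b+2) + q^2 + q
  have g1 : q ^ 2 ≤ q ^ (a + b + 2) := Nat.pow_le_pow_right (by omega) (by omega)
  have hq' : (2:ℤ) ≤ (q:ℤ) := by exact_mod_cast hq
  have g1' : ((q:ℤ)) ^ 2 ≤ (q:ℤ) ^ (a + b + 2) := by exact_mod_cast g1
  have g0' : (1:ℤ) ≤ (q:ℤ) ^ 2 := one_le_pow₀ (by linarith)
  have key' : (q:ℤ) ^ (a + 2) + q ^ (b + 2) ≤ q ^ (a + b + 2) + q ^ 2 := by exact_mod_cast key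
  have g3' : (q:ℤ) ^ (a + b + 2) * q = q ^ (a + b + 3) := by ring
  have p1 : ((q:ℤ) ^ (a + b + 2) - q ^ 2) * ((q:ℤ) - 1) ≥ 0 :=
    mul_nonneg (by linarith) (by linarith)
  have p2 : ((q:ℤ) ^ 2 - 1) * ((q:ℤ) - 2) ≥ 0 := mul_nonneg (by linarith) (by linarith)
  zify
  nlinarith [key', g3', p1, p2]

/-- A,B ≥ 2, A+B = m+1, q ≥ 2: bounds for (q^A-1)(q^B-1). -/
private lemma lemA (q A B m : ℕ) (hq : 2 ≤ q) (hA : 2 ≤ A) (hB : 2 ≤ B)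
    (hab : A + B = m + 1) :
    (q ^ m + 1) * (q - 1) ≤ (q ^ A - 1) * (q ^ B - 1) ∧
    (q ^ A - 1) * (q ^ B - 1) ≤ q ^ (m + 1) - 1 := by
  have hq1 : 1 ≤ q := by omega
  have hS := sumpow q A B m hq hA hB hab
  have h1 : 1 ≤ q ^ A := Nat.one_le_pow _ _ hq1
  have h2 : 1 ≤ q ^ B := Nat.one_le_pow _ _ hq1
  have h4 : 1 ≤ q ^ (m + 1) := Nat.one_le_pow _ _ hq1
  have hS' : (q:ℤ) ^ A + q ^ B + q ≤ q ^ m + 2 := by exact_mod_cast hS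
  have hp' : (q:ℤ) ^ A * q ^ B = q ^ m * q := by
    rw [← pow_add]; rw [hab]; ring
  have e : ((q:ℤ) ^ A - 1) * (q ^ B - 1) = q ^ A * q ^ B - q ^ A - q ^ B + 1 := by ring
  have h1' : (1:ℤ) ≤ (q:ℤ) ^ A := by exact_mod_cast h1
  have h2' : (1:ℤ) ≤ (q:ℤ) ^ B := by exact_mod_cast h2
  constructor
  · zify [h1, h2, hq1]
    linarith [hS', hp', e]
  · zify [h1, h2, h4, hq1]
    have e2 : ((q:ℤ)) ^ (m + 1) = q ^ m * q := by ring
    linarith [hp', e, h1', h2']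

/-- A,B ≥ 2, A+B = m, q ≥ 2: bounds for q(q^A-1)(q^B-1). -/
private lemma lemB (q A B m : ℕ) (hq : 2 ≤ q) (hA : 2 ≤ A) (hB : 2 ≤ B)
    (hab : A + B = m) :
    q ^ m < q * (q ^ A - 1) * (q ^ B - 1) ∧
    q * (q ^ A - 1) * (q ^ B - 1) ≤ q ^ (m + 1) - 1 := by
  have hq1 : 1 ≤ q := by omega
  obtain ⟨a, rfl⟩ : ∃ a, A = a + 2 := ⟨A - 2, by omega⟩
  obtain ⟨b, rfl⟩ : ∃ b, B = b + 2 := ⟨B - 2, by omega⟩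
  obtain rfl : m = a + b + 4 := by omega
  have key3 : q ^ (a + 3) + q ^ (b + 3) ≤ q ^ (a + b + 3) + q ^ 3 := by
    calc q ^ (a + 3) + q ^ (b + 3) = (q ^ a + q ^ b) * q ^ 3 := by ring
    _ ≤ (q ^ (a + b) + 1) * q ^ 3 := Nat.mul_le_mul_right _ (hxy q a b hq1)
    _ = q ^ (a + b + 3) + q ^ 3 := by ring
  have growth : q ^ (a + b + 4) + q ^ (a + b + 3) + q ^ 3 ≤ q ^ (a + b + 5) := by
    have g1 : q ^ 3 ≤ q ^ (a + b + 3) := Nat.pow_le_pow_right hq1 (by omega)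
    have g2 : q ^ (a + b + 3) * (q + 2) ≤ q ^ (a + b + 3) * (q * q) :=
      Nat.mul_le_mul_left _ (by nlinarith)
    have g3 : q ^ (a + b + 3) * (q * q) = q ^ (a + b + 5) := by ring
    have g4 : q ^ (a + b + 3) * (q + 2) = q ^ (a + b + 4) + 2 * q ^ (a + b + 3) := by ring
    omega
  have h1 : 1 ≤ q ^ (a + 2) := Nat.one_le_pow _ _ hq1
  have h2 : 1 ≤ q ^ (b + 2) := Nat.one_le_pow _ _ hq1
  have h4 : 1 ≤ q ^ (a + b + 4 + 1) := Nat.one_le_pow _ _ hq1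
  have key3' : (q:ℤ) ^ (a + 3) + q ^ (b + 3) ≤ q ^ (a + b + 3) + q ^ 3 := by exact_mod_cast key3
  have growth' : (q:ℤ) ^ (a + b + 4) + q ^ (a + b + 3) + q ^ 3 ≤ q ^ (a + b + 5) := by
    exact_mod_cast growth
  have e : (q:ℤ) * ((q:ℤ) ^ (a + 2) - 1) * ((q:ℤ) ^ (b + 2) - 1)
      = q ^ (a + b + 5) - q ^ (a + 3) - q ^ (b + 3) + q := by ring
  have hq' : (2:ℤ) ≤ (q:ℤ) := by exact_mod_cast hq
  have hQa : (q:ℤ) ≤ (q:ℤ) ^ (a + 3) := by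
    calc (q:ℤ) = (q:ℤ) ^ 1 := (pow_one _).symm
    _ ≤ (q:ℤ) ^ (a + 3) := pow_le_pow_right₀ (by linarith) (by omega)
  have hQb : (1:ℤ) ≤ (q:ℤ) ^ (b + 3) := one_le_pow₀ (by linarith)
  constructor
  · zify [h1, h2]
    linarith [e, key3', growth']
  · zify [h1, h2, h4]
    have e2 : ((q:ℤ)) ^ (a + b + 4 + 1) = (q:ℤ) ^ (a + b + 5) := by ring
    linarith [e, hQa, hQb]

private lemma prod_bits (q m : ℕ) (hq : 2 ≤ q) (n : ℕ) :
    q ^ (m % 2 ^ n) ≤ (∏ i ∈ Finset.range n, if m.testBit i then q ^ 2 ^ i + 1 else 1) ∧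
    (m % 2 ^ n ≠ 0 → q ^ (m % 2 ^ n) <
      (∏ i ∈ Finset.range n, if m.testBit i then q ^ 2 ^ i + 1 else 1)) ∧
    (∏ i ∈ Finset.range n, if m.testBit i then q ^ 2 ^ i + 1 else 1) * (q - 1)
      ≤ q ^ (m % 2 ^ n + 1) - 1 := by
  induction n with
  | zero =>
    simp only [Nat.pow_zero, Nat.mod_one, Finset.range_zero, Finset.prod_empty, pow_zero,
      pow_one, one_mul]
    exact ⟨le_refl 1, fun h => absurd rfl h, by rw [zero_add, pow_one]⟩
  | succ n ih =>
    obtain ⟨ih1, ih2, ih3⟩ := ih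
    rw [Finset.prod_range_succ]
    set P := (∏ i ∈ Finset.range n, if m.testBit i then q ^ 2 ^ i + 1 else 1) with hP
    set r := m % 2 ^ n with hr
    have hrlt : r < 2 ^ n := Nat.mod_lt _ (Nat.pow_pos (by omega))
    cases hbit : m.testBit n with
    | false =>
      have hmod : m % 2 ^ (n + 1) = r := by
        have h2 : m / 2 ^ n % 2 = 0 := by
          simp [Nat.testBit_eq_decide_div_mod_eq] at hbit; omega
        rw [pow_succ, Nat.mod_mul, h2]; simp [hr]
      rw [hmod]
      simpa using ⟨ih1, ih2, ih3⟩
    | true =>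
      have hmod : m % 2 ^ (n + 1) = 2 ^ n + r := by
        have h2 : m / 2 ^ n % 2 = 1 := by
          simpa [Nat.testBit_eq_decide_div_mod_eq] using hbit
        rw [pow_succ, Nat.mod_mul, h2, hr]; ring
      rw [hmod]
      simp only [if_true]
      have hP1 : 1 ≤ P := le_trans (Nat.one_le_pow _ _ (by omega)) ih1
      have hlow : q ^ (2 ^ n + r) < P * (q ^ 2 ^ n + 1) := by
        calc q ^ (2 ^ n + r) = q ^ r * q ^ 2 ^ n := by rw [← pow_add]; ring_nf
        _ ≤ P * q ^ 2 ^ n := Nat.mul_le_mul_right _ ih1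
        _ < P * (q ^ 2 ^ n + 1) := by nlinarith [hP1]
      refine ⟨le_of_lt hlow, fun _ => hlow, ?_⟩
      -- upper bound
      have step : (q ^ (r + 1) - 1) * (q ^ 2 ^ n + 1) ≤ q ^ (2 ^ n + r + 1) - 1 := by
        have e1 : 1 ≤ q ^ (r + 1) := Nat.one_le_pow _ _ (by omega)
        have e2 : 1 ≤ q ^ (2 ^ n + r + 1) := Nat.one_le_pow _ _ (by omega)
        have e3 : q ^ (r + 1) ≤ q ^ 2 ^ n := Nat.pow_le_pow_right (by omega) (by omega)
        have e4 : (q:ℤ) ^ (r + 1) * q ^ 2 ^ n = q ^ (2 ^ n + r + 1) := by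
          rw [← pow_add]; ring_nf
        have e3' : (q:ℤ) ^ (r + 1) ≤ (q:ℤ) ^ 2 ^ n := by exact_mod_cast e3
        zify [e1, e2]
        nlinarith [e4, e3']
      calc P * (q ^ 2 ^ n + 1) * (q - 1) = P * (q - 1) * (q ^ 2 ^ n + 1) := by ring
      _ ≤ (q ^ (r + 1) - 1) * (q ^ 2 ^ n + 1) := Nat.mul_le_mul_right _ ih3
      _ ≤ q ^ (2 ^ n + r + 1) - 1 := step

/-- The `m0 = 2^(L-1)` subcase of the `q = 2` case. -/
private lemma lemC (c m : ℕ) (hc : 4 ≤ c) (hm : m + 1 = 3 * c) :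
    2 ^ m < (2 ^ (2 * c) + 1) * (2 ^ c - 1) ∧
    (2 ^ (2 * c) + 1) * (2 ^ c - 1) ≤ 2 ^ (m + 1) - 1 := by
  have h1 : 1 ≤ 2 ^ c := Nat.one_le_pow _ _ (by omega)
  have h2 : 1 ≤ 2 ^ (m + 1) := Nat.one_le_pow _ _ (by omega)
  have e1 : (2:ℤ) ^ (2 * c) = 2 ^ c * 2 ^ c := by rw [two_mul, pow_add]
  have e2 : (2:ℤ) ^ (m + 1) = 2 ^ c * 2 ^ c * 2 ^ c := by
    rw [hm]; rw [show 3 * c = c + c + c by ring]; rw [pow_add, pow_add]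
  have e3 : (2:ℤ) * 2 ^ m = 2 ^ (m + 1) := by rw [pow_succ]; ring
  have e4 : (16:ℤ) ≤ 2 ^ c := by
    calc (16:ℤ) = 2 ^ 4 := by norm_num
    _ ≤ 2 ^ c := pow_le_pow_right₀ (by norm_num) hc
  constructor
  · zify [h1]
    nlinarith [e1, e2, e3, e4]
  · zify [h1, h2]
    nlinarith [e1, e2, e4]

/-- `Mm m q` is the function `M_m(q)` from Definition 1.2 of the paper. -/
def Mm (m q : ℕ) : ℕ :=
  if q = 2 then
    -- `L` is the largest positive integer `ℓ` with `2^ℓ - 1 ≤ m`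
    let L := Nat.findGreatest (fun l => 0 < l ∧ 2 ^ l - 1 ≤ m) m
    let m0 := m - (2 ^ L - 1)
    if m0 ≤ 3 then q ^ m0 * (q ^ 2 ^ L - 1)
    else if m0 < 2 ^ (L - 1) then
      if Odd m0 then (q ^ (2 ^ (L - 1) + m0) - 1) * (q ^ 2 ^ (L - 1) - 1)
      else q * (q ^ (2 ^ (L - 1) + m0 - 1) - 1) * (q ^ 2 ^ (L - 1) - 1)
    else if m0 = 2 ^ (L - 1) then (q ^ 2 ^ L + 1) * (q ^ 2 ^ (L - 1) - 1)
    else if Odd m0 then (q ^ m0 - 1) * (q ^ 2 ^ L - 1)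
    else q * (q ^ (m0 - 1) - 1) * (q ^ 2 ^ L - 1)
  else if Odd m then
    -- the product of `q^(2^i) + 1` over the summands `2^i` of the 2-adic expansion of `m`
    ∏ i ∈ Finset.range (m + 1), if m.testBit i then q ^ 2 ^ i + 1 else 1
  else if m = 2 then q ^ 2 + 1
  else
    -- `L` is the largest positive integer `ℓ` with `2^ℓ + 2^(ℓ-1) ≤ m`
    let L := Nat.findGreatest (fun l => 0 < l ∧ 2 ^ l + 2 ^ (l - 1) ≤ m) m
    (q ^ (m - 2 ^ L + 1) - 1) * (q ^ 2 ^ L - 1) / (q - 1)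

private lemma q2_case (m : ℕ) (hm : 1 ≤ m) :
    2 ^ m < Mm m 2 ∧ Mm m 2 ≤ 2 ^ (m + 1) - 1 := by
  rw [Mm, if_pos rfl]
  set L := Nat.findGreatest (fun l => 0 < l ∧ 2 ^ l - 1 ≤ m) m with hLdef
  set m0 := m - (2 ^ L - 1) with hm0def
  -- basic facts about L and m0
  have hP1 : 0 < 1 ∧ 2 ^ 1 - 1 ≤ m := ⟨one_pos, by omega⟩
  have hL1 : 1 ≤ L := Nat.le_findGreatest hm hP1
  have hspec : 0 < L ∧ 2 ^ L - 1 ≤ m := by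
    have h := Nat.findGreatest_spec (P := fun l => 0 < l ∧ 2 ^ l - 1 ≤ m) (n := m) hm hP1
    exact h
  have hk2 : 2 ≤ 2 ^ L := by
    calc 2 = 2 ^ 1 := rfl
    _ ≤ 2 ^ L := Nat.pow_le_pow_right (by omega) hL1
  have hmax : m + 1 < 2 ^ (L + 1) := by
    by_cases h : L + 1 ≤ m
    · have hng := Nat.findGreatest_is_greatest (P := fun l => 0 < l ∧ 2 ^ l - 1 ≤ m)
        (n := m) (Nat.lt_succ_self L) h
      have hpos : 1 ≤ 2 ^ (L + 1) := Nat.one_le_pow _ _ (by omega)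
      simp only [not_and, not_le] at hng
      have := hng (by omega)
      omega
    · have hL2 : m ≤ L := by omega
      have : m + 1 < 2 ^ (m + 1) := (Nat.lt_two_pow_self (n := m + 1))
      have hle : 2 ^ (m + 1) ≤ 2 ^ (L + 1) := Nat.pow_le_pow_right (by omega) (by omega)
      omega
  have hdouble : 2 ^ L + 2 ^ L = 2 ^ (L + 1) := by rw [pow_succ]; ring
  have hsum : m0 + 2 ^ L = m + 1 := by omega
  have hm0lt : m0 < 2 ^ L := by omega
  have hhalf : 2 ^ (L - 1) + 2 ^ (L - 1) = 2 ^ L := by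
    have h' : L - 1 + 1 = L := by omega
    calc 2 ^ (L - 1) + 2 ^ (L - 1) = 2 ^ (L - 1) * 2 := by ring
    _ = 2 ^ (L - 1 + 1) := by rw [pow_succ]
    _ = 2 ^ L := by rw [h']
  show 2 ^ m < (if m0 ≤ 3 then 2 ^ m0 * (2 ^ 2 ^ L - 1)
      else if m0 < 2 ^ (L - 1) then
        if Odd m0 then (2 ^ (2 ^ (L - 1) + m0) - 1) * (2 ^ 2 ^ (L - 1) - 1)
        else 2 * (2 ^ (2 ^ (L - 1) + m0 - 1) - 1) * (2 ^ 2 ^ (L - 1) - 1)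
      else if m0 = 2 ^ (L - 1) then (2 ^ 2 ^ L + 1) * (2 ^ 2 ^ (L - 1) - 1)
      else if Odd m0 then (2 ^ m0 - 1) * (2 ^ 2 ^ L - 1)
      else 2 * (2 ^ (m0 - 1) - 1) * (2 ^ 2 ^ L - 1)) ∧
    (if m0 ≤ 3 then 2 ^ m0 * (2 ^ 2 ^ L - 1)
      else if m0 < 2 ^ (L - 1) then
        if Odd m0 then (2 ^ (2 ^ (L - 1) + m0) - 1) * (2 ^ 2 ^ (L - 1) - 1)
        else 2 * (2 ^ (2 ^ (L - 1) + m0 - 1) - 1) * (2 ^ 2 ^ (L - 1) - 1)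
      else if m0 = 2 ^ (L - 1) then (2 ^ 2 ^ L + 1) * (2 ^ 2 ^ (L - 1) - 1)
      else if Odd m0 then (2 ^ m0 - 1) * (2 ^ 2 ^ L - 1)
      else 2 * (2 ^ (m0 - 1) - 1) * (2 ^ 2 ^ L - 1)) ≤ 2 ^ (m + 1) - 1
  split_ifs with h1 h2 h3 h4 h5
  -- case m0 ≤ 3
  · have hm0m : m0 < m := by omega
    have he : 2 ^ m0 * (2 ^ 2 ^ L - 1) = 2 ^ (m + 1) - 2 ^ m0 := by
      have hee : 2 ^ m0 * 2 ^ 2 ^ L = 2 ^ (m + 1) := by rw [← pow_add, hsum]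
      have hee' : (2:ℤ) ^ m0 * 2 ^ 2 ^ L = 2 ^ (m + 1) := by exact_mod_cast hee
      have hp1 : 1 ≤ 2 ^ 2 ^ L := Nat.one_le_pow _ _ (by omega)
      have hp2 : 2 ^ m0 ≤ 2 ^ (m + 1) := Nat.pow_le_pow_right (by omega) (by omega)
      zify [hp1, hp2]
      nlinarith [hee']
    have hlt : 2 ^ m0 < 2 ^ m := Nat.pow_lt_pow_right (by omega) hm0m
    have hd : 2 * 2 ^ m = 2 ^ (m + 1) := by rw [pow_succ]; ring
    have hp : 1 ≤ 2 ^ m0 := Nat.one_le_pow _ _ (by omega)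
    omega
  -- case 3 < m0 < 2^(L-1), m0 odd
  · have hab : (2 ^ (L - 1) + m0) + 2 ^ (L - 1) = m + 1 := by omega
    obtain ⟨l1, l2⟩ := lemA 2 (2 ^ (L - 1) + m0) (2 ^ (L - 1)) m (le_refl 2)
      (by omega) (by omega) hab
    norm_num at l1
    exact ⟨by omega, l2⟩
  -- case 3 < m0 < 2^(L-1), m0 even
  · have hab : (2 ^ (L - 1) + m0 - 1) + 2 ^ (L - 1) = m := by omega
    exact lemB 2 (2 ^ (L - 1) + m0 - 1) (2 ^ (L - 1)) m (le_refl 2) (by omega) (by omega) hab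
  -- case m0 = 2^(L-1)
  · have hc4 : 4 ≤ 2 ^ (L - 1) := by omega
    have hmc : m + 1 = 3 * 2 ^ (L - 1) := by omega
    have h2L : 2 ^ L = 2 * 2 ^ (L - 1) := by omega
    rw [h2L]
    exact lemC (2 ^ (L - 1)) m hc4 hmc
  -- case m0 > 2^(L-1), m0 ≠ 2^(L-1), m0 odd
  · have hab : m0 + 2 ^ L = m + 1 := hsum
    obtain ⟨l1, l2⟩ := lemA 2 m0 (2 ^ L) m (le_refl 2) (by omega) (by omega) hab
    norm_num at l1
    exact ⟨by omega, l2⟩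
  -- case m0 > 2^(L-1), m0 even
  · have hab : (m0 - 1) + 2 ^ L = m := by omega
    exact lemB 2 (m0 - 1) (2 ^ L) m (le_refl 2) (by omega) (by omega) hab

/-- Lemma 1.3, first part: q^m < M_m(q) ≤ (q^(m+1) - 1)/(q - 1). -/
theorem Mm_bounds (f q m : ℕ) (hf : 1 ≤ f) (hq : q = 2 ^ f) (hm : 1 ≤ m) :
    q ^ m < Mm m q ∧ Mm m q ≤ (q ^ (m + 1) - 1) / (q - 1) := by
  have hq2 : 2 ≤ q := by
    subst hq
    calc 2 = 2 ^ 1 := rfl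
    _ ≤ 2 ^ f := Nat.pow_le_pow_right (by omega) hf
  by_cases hq' : q = 2
  · subst hq'
    obtain ⟨l1, l2⟩ := q2_case m hm
    refine ⟨l1, ?_⟩
    simpa using l2
  · rw [Mm, if_neg hq']
    have hq1 : 0 < q - 1 := by omega
    by_cases hodd : Odd m
    · rw [if_pos hodd]
      have hmlt : m < 2 ^ (m + 1) := by
        have h1 : m < 2 ^ m := (Nat.lt_two_pow_self (n := m))
        have h2 : 2 ^ m ≤ 2 ^ (m + 1) := Nat.pow_le_pow_right (by omega) (by omega)
        omega
      obtain ⟨p1, p2, p3⟩ := prod_bits q m hq2 (m + 1)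
      rw [Nat.mod_eq_of_lt hmlt] at p1 p2 p3
      refine ⟨p2 (by omega), ?_⟩
      rw [Nat.le_div_iff_mul_le hq1]
      exact p3
    · rw [if_neg hodd]
      by_cases hm2 : m = 2
      · rw [if_pos hm2]
        subst hm2
        constructor
        · omega
        · rw [Nat.le_div_iff_mul_le hq1]
          have e1 : 1 ≤ q ^ (2 + 1) := Nat.one_le_pow _ _ (by omega)
          have e2 : (q:ℤ) ^ (2 + 1) = q ^ 2 * q := by ring
          have hq1' : 1 ≤ q := by omega
          have e3 : (q:ℤ) ≤ (q:ℤ) ^ 2 := by nlinarith [sq_nonneg ((q:ℤ) - 1)]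
          zify [e1, hq1']
          nlinarith [e2, e3]
      · rw [if_neg hm2]
        have hm4 : 4 ≤ m := by
          rw [Nat.not_odd_iff_even, Nat.even_iff] at hodd
          omega
        set L := Nat.findGreatest (fun l => 0 < l ∧ 2 ^ l + 2 ^ (l - 1) ≤ m) m with hLdef
        have hP1 : 0 < 1 ∧ 2 ^ 1 + 2 ^ (1 - 1) ≤ m := ⟨one_pos, by norm_num; omega⟩
        have hL1 : 1 ≤ L := Nat.le_findGreatest (by omega) hP1
        have hspec : 0 < L ∧ 2 ^ L + 2 ^ (L - 1) ≤ m := by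
          have h := Nat.findGreatest_spec (P := fun l => 0 < l ∧ 2 ^ l + 2 ^ (l - 1) ≤ m)
            (n := m) (m := 1) (by omega) hP1
          exact h
        have hb2 : 2 ≤ 2 ^ L := by
          calc 2 = 2 ^ 1 := rfl
          _ ≤ 2 ^ L := Nat.pow_le_pow_right (by omega) hL1
        have hhalf : 1 ≤ 2 ^ (L - 1) := Nat.one_le_pow _ _ (by omega)
        have hab : (m - 2 ^ L + 1) + 2 ^ L = m + 1 := by omega
        obtain ⟨l1, l2⟩ := lemA q (m - 2 ^ L + 1) (2 ^ L) m hq2 (by omega) (by omega) hab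
        have hgoal : q ^ m < (q ^ (m - 2 ^ L + 1) - 1) * (q ^ 2 ^ L - 1) / (q - 1) ∧
            (q ^ (m - 2 ^ L + 1) - 1) * (q ^ 2 ^ L - 1) / (q - 1) ≤
              (q ^ (m + 1) - 1) / (q - 1) := by
          constructor
          · have hle : q ^ m + 1 ≤ (q ^ (m - 2 ^ L + 1) - 1) * (q ^ 2 ^ L - 1) / (q - 1) := by
              rw [Nat.le_div_iff_mul_le hq1]
              exact l1
            omega
          · exact Nat.div_le_div_right l2
        exact hgoal
end

section
/- Let m ≥ 1 be an integer and let q be a power of 2. If m ≠ 2 or q = 2, then M_m(q) > q^{m+2}/(q^2 - 1). -/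
lemma key3 (A B : ℕ) (hA : 2 ≤ A) (hB : 2 ≤ B) (hAB : 6 ≤ A + B) :
    2^(A+B+1) < 3 * ((2^A - 1) * (2^B - 1)) := by
  set x := 2^A with hx
  set y := 2^B with hy
  have hx4 : 4 ≤ x := by calc (4:ℕ) = 2^2 := rfl
                          _ ≤ 2^A := Nat.pow_le_pow_right (by norm_num) hA
  have hy4 : 4 ≤ y := by calc (4:ℕ) = 2^2 := rfl
                          _ ≤ 2^B := Nat.pow_le_pow_right (by norm_num) hB
  have hxy : 64 ≤ x * y := by
    rw [hx, hy, ← pow_add]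
    calc (64:ℕ) = 2^6 := rfl
      _ ≤ 2^(A+B) := Nat.pow_le_pow_right (by norm_num) hAB
  have h2 : 2^(A+B+1) = 2 * (x * y) := by rw [hx, hy, ← pow_add]; ring
  rw [h2]
  zify [show 1 ≤ x by omega, show 1 ≤ y by omega]
  nlinarith [mul_nonneg (by linarith : (0:ℤ) ≤ (x:ℤ) - 4) (by linarith : (0:ℤ) ≤ (y:ℤ) - 4),
    (by exact_mod_cast hxy : (64:ℤ) ≤ (x:ℤ) * y)]

lemma key4 (q a b : ℕ) (hq : 4 ≤ q) (ha : 2 ≤ a) (hb : 2 ≤ b) :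
    (q - 1) * q^(a+b+1) < (q^2 - 1) * ((q^a - 1) * (q^b - 1)) := by
  set x := q^a with hx
  set y := q^b with hy
  have hxq : q^2 ≤ x := Nat.pow_le_pow_right (by omega) ha
  have hyq : q^2 ≤ y := Nat.pow_le_pow_right (by omega) hb
  have h2 : q^(a+b+1) = q * (x * y) := by rw [hx, hy]; ring
  have hq2 : 16 ≤ q^2 := by nlinarith
  rw [h2]
  zify [show 1 ≤ q by omega, show 1 ≤ q^2 by omega, show 1 ≤ x by omega, show 1 ≤ y by omega]
  have hx' : ((q:ℤ))^2 ≤ (x:ℤ) := by exact_mod_cast hxq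
  have hy' : ((q:ℤ))^2 ≤ (y:ℤ) := by exact_mod_cast hyq
  have hq' : (4:ℤ) ≤ (q:ℤ) := by exact_mod_cast hq
  nlinarith [mul_nonneg (by linarith : (0:ℤ) ≤ (q:ℤ) - 1)
      (mul_nonneg (by linarith : (0:ℤ) ≤ (x:ℤ) - (q:ℤ)^2) (by linarith : (0:ℤ) ≤ (y:ℤ) - (q:ℤ)^2)),
    mul_nonneg (by linarith : (0:ℤ) ≤ (x:ℤ) + (y:ℤ) - 2*(q:ℤ)^2)
      (by nlinarith : (0:ℤ) ≤ (q:ℤ)^3 - 2*(q:ℤ)^2 + 1),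
    mul_nonneg (by positivity : (0:ℤ) ≤ (q:ℤ)^4) (by linarith : (0:ℤ) ≤ (q:ℤ) - 4)]

lemma prodB : ∀ (n Q m : ℕ), 1 ≤ Q → m < 2^n →
    Q^m ≤ ∏ i ∈ Finset.range n, (if m.testBit i then Q^(2^i)+1 else 1) := by
  intro n
  induction n with
  | zero => intro Q m hQ hm
            interval_cases m
            simp
  | succ n ih =>
    intro Q m hQ hm
    rw [Finset.prod_range_succ']
    have hdiv : m / 2 < 2^n := by
      have : 2^(n+1) = 2*2^n := by ring
      omega
    have hstep : ∏ i ∈ Finset.range n, (if m.testBit (i+1) then Q^(2^(i+1))+1 else 1)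
        = ∏ i ∈ Finset.range n, (if (m/2).testBit i then (Q^2)^(2^i)+1 else 1) := by
      apply Finset.prod_congr rfl
      intro i _
      rw [Nat.testBit_succ, ← pow_mul, ← pow_succ']
    rw [hstep]
    have h1 := ih (Q^2) (m/2) (by nlinarith) hdiv
    have h0 : Q ^ (m % 2) ≤ (if m.testBit 0 then Q^(2^0)+1 else 1) := by
      rcases Nat.mod_two_eq_zero_or_one m with h | h
      · have : m.testBit 0 = false := by simp [Nat.testBit_zero, h]
        simp [this, h]
      · have : m.testBit 0 = true := by simp [Nat.testBit_zero, h]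
        simp [this, h]
    calc Q^m = (Q^2)^(m/2) * Q^(m%2) := by
            rw [← pow_mul, ← pow_add]; congr 1; omega
      _ ≤ _ := Nat.mul_le_mul h1 h0

lemma prodOdd (q m : ℕ) (hq : 2 ≤ q) (hm : Odd m) :
    (q+1) * q^(m-1) ≤ ∏ i ∈ Finset.range (m+1), (if m.testBit i then q^(2^i)+1 else 1) := by
  rw [Finset.prod_range_succ']
  have hstep : ∏ i ∈ Finset.range m, (if m.testBit (i+1) then q^(2^(i+1))+1 else 1)
      = ∏ i ∈ Finset.range m, (if (m/2).testBit i then (q^2)^(2^i)+1 else 1) := by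
    apply Finset.prod_congr rfl
    intro i _
    rw [Nat.testBit_succ, ← pow_mul, ← pow_succ']
  rw [hstep]
  obtain ⟨k, hk⟩ := hm
  have hbit : m.testBit 0 = true := by simp [Nat.testBit_zero]; omega
  have h1 : (q^2)^(m/2) ≤ ∏ i ∈ Finset.range m, (if (m/2).testBit i then (q^2)^(2^i)+1 else 1) :=
    prodB m (q^2) (m/2) (by nlinarith) (by
      have := Nat.lt_two_pow_self (n := m)
      omega)
  have hexp : (q^2)^(m/2) = q^(m-1) := by
    rw [← pow_mul]; congr 1; omega
  rw [hbit]
  simp only [pow_zero, pow_one, if_true]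
  calc (q+1) * q^(m-1) = q^(m-1) * (q+1) := by ring
    _ ≤ _ := Nat.mul_le_mul (hexp ▸ h1) (le_refl _)



/-- Lemma 1.3, second part: if m ≠ 2 or q = 2, then M_m(q) > q^(m+2)/(q^2 - 1),
understood as (q^2 - 1) · M_m(q) > q^(m+2). -/
theorem Mm_lower_bound (f q m : ℕ) (hf : 1 ≤ f) (hq : q = 2 ^ f) (hm : 1 ≤ m)
    (h : m ≠ 2 ∨ q = 2) :
    q ^ (m + 2) < (q ^ 2 - 1) * Mm m q := by
  rcases eq_or_ne q 2 with hq2 | hq2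
  · subst hq2
    simp only [Mm, if_pos rfl, if_true]
    set L := Nat.findGreatest (fun l => 0 < l ∧ 2 ^ l - 1 ≤ m) m with hLdef
    have hPL : 0 < L ∧ 2^L - 1 ≤ m :=
      Nat.findGreatest_spec (P := fun l => 0 < l ∧ 2 ^ l - 1 ≤ m) hm ⟨one_pos, by omega⟩
    obtain ⟨hL0, hLm⟩ := hPL
    have hmax : m < 2^(L+1) - 1 := by
      by_cases hLe : L + 1 ≤ m
      · have hng := Nat.findGreatest_is_greatest (P := fun l => 0 < l ∧ 2 ^ l - 1 ≤ m)
          (lt_add_one L) hLe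
        simp only [not_and, not_le] at hng
        exact hng (by omega)
      · have h1 : m + 1 < 2^(m+1) := Nat.lt_two_pow_self (n := m+1)
        have h2 : 2^(m+1) ≤ 2^(L+1) := Nat.pow_le_pow_right (by norm_num) (by omega)
        omega
    set m0 := m - (2^L - 1) with hm0def
    have h2L : 2^(L+1) = 2*2^L := by ring
    have hb2 : 2 ≤ 2^L := by calc (2:ℕ) = 2^1 := rfl
                              _ ≤ 2^L := Nat.pow_le_pow_right (by norm_num) hL0
    have hm0lt : m0 < 2^L := by omega
    have hmeq : m = 2^L - 1 + m0 := by omega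
    have hc2 : 2^L = 2 * 2^(L-1) := by
      rw [← pow_succ']; congr 1; omega
    norm_num
    split_ifs with h1 h2 h3 h4 h5
    · -- m0 ≤ 3
      have he : m + 2 = m0 + (2^L + 1) := by omega
      rw [he, pow_add]
      have hkey : 2^(2^L + 1) < 3 * (2^(2^L) - 1) := by
        have e1 : 2^(2^L + 1) = 2 * 2^(2^L) := by ring
        have e2 : 4 ≤ 2^(2^L) := by calc (4:ℕ) = 2^2 := rfl
                                      _ ≤ 2^(2^L) := Nat.pow_le_pow_right (by norm_num) hb2
        omega
      calc 2^m0 * 2^(2^L+1) < 2^m0 * (3 * (2^(2^L) - 1)) :=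
            (Nat.mul_lt_mul_left (Nat.pow_pos (n := m0) (by norm_num))).mpr hkey
        _ = 3 * (2^m0 * (2^(2^L) - 1)) := by ring
    · -- 3 < m0 < 2^(L-1), odd
      have he : m + 2 = (2^(L-1) + m0) + 2^(L-1) + 1 := by omega
      rw [he]
      exact key3 _ _ (by omega) (by omega) (by omega)
    · -- 3 < m0 < 2^(L-1), even
      have he : m + 2 = ((2^(L-1) + m0 - 1) + 2^(L-1) + 1) + 1 := by omega
      rw [he, pow_succ]
      have hk := key3 (2^(L-1) + m0 - 1) (2^(L-1)) (by omega) (by omega) (by omega)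
      calc 2 ^ ((2^(L-1)+m0-1) + 2^(L-1) + 1) * 2
            < (3 * ((2^(2^(L-1)+m0-1) - 1) * (2^(2^(L-1)) - 1))) * 2 :=
              (Nat.mul_lt_mul_right (by norm_num)).mpr hk
        _ = 3 * (2 * (2^(2^(L-1)+m0-1) - 1) * (2^(2^(L-1)) - 1)) := by ring
    · -- m0 = 2^(L-1)
      have he : m + 2 = 2^L + 2^(L-1) + 1 := by omega
      rw [he]
      have hk := key3 (2^L) (2^(L-1)) (by omega) (by omega) (by omega)
      calc 2 ^ (2^L + 2^(L-1) + 1) < 3 * ((2^(2^L) - 1) * (2^(2^(L-1)) - 1)) := hk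
        _ ≤ 3 * ((2^(2^L) + 1) * (2^(2^(L-1)) - 1)) := by
            have hle : 2^(2^L) - 1 ≤ 2^(2^L) + 1 := le_trans (Nat.sub_le _ _) (Nat.le_add_right _ _)
            exact Nat.mul_le_mul_left 3 (Nat.mul_le_mul_right _ hle)
    · -- m0 > 2^(L-1), odd
      have he : m + 2 = m0 + 2^L + 1 := by omega
      rw [he]
      exact key3 _ _ (by omega) (by omega) (by omega)
    · -- m0 > 2^(L-1), even
      have hm04 : 4 ≤ m0 := by
        rcases Nat.even_or_odd m0 with he | ho
        · obtain ⟨r, hr⟩ := he; omega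
        · exact absurd ho h5
      have he : m + 2 = ((m0 - 1) + 2^L + 1) + 1 := by omega
      rw [he, pow_succ]
      have hk := key3 (m0 - 1) (2^L) (by omega) (by omega) (by omega)
      calc 2 ^ ((m0-1) + 2^L + 1) * 2
            < (3 * ((2^(m0-1) - 1) * (2^(2^L) - 1))) * 2 :=
              (Nat.mul_lt_mul_right (by norm_num)).mpr hk
        _ = 3 * (2 * (2^(m0-1) - 1) * (2^(2^L) - 1)) := by ring
  · -- q ≠ 2
    have hm2 : m ≠ 2 := by rcases h with h | h; exact h; exact absurd h hq2
    have hf2 : 2 ≤ f := by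
      rcases Nat.lt_or_ge f 2 with hlt | hge
      · interval_cases f
        · simp at hq; omega
      · exact hge
    have hq4 : 4 ≤ q := by
      rw [hq]
      calc (4:ℕ) = 2^2 := rfl
        _ ≤ 2^f := Nat.pow_le_pow_right (by norm_num) hf2
    simp only [Mm, if_neg hq2]
    rcases Nat.even_or_odd m with hev | hod
    · -- even case
      have hodd : ¬ Odd m := by simp [Nat.not_odd_iff_even.mpr hev]
      rw [if_neg hodd, if_neg hm2]
      obtain ⟨r, hr⟩ := hev
      have hm4 : 4 ≤ m := by omega
      set L := Nat.findGreatest (fun l => 0 < l ∧ 2 ^ l + 2 ^ (l - 1) ≤ m) m with hLdef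
      have hPL : 0 < L ∧ 2^L + 2^(L-1) ≤ m :=
        Nat.findGreatest_spec (P := fun l => 0 < l ∧ 2 ^ l + 2 ^ (l-1) ≤ m) hm
          ⟨one_pos, by norm_num; omega⟩
      obtain ⟨hL0, hLm⟩ := hPL
      have hc1 : 1 ≤ 2^(L-1) := Nat.one_le_two_pow
      have hb2 : 2 ≤ 2^L := by calc (2:ℕ) = 2^1 := rfl
                                _ ≤ 2^L := Nat.pow_le_pow_right (by norm_num) hL0
      set a := m - 2^L + 1 with hadef
      set b := 2^L with hbdef
      have ha2 : 2 ≤ a := by omega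
      have hab : a + b = m + 1 := by omega
      have hdvd : (q-1) ∣ (q^b - 1) := by
        have := Nat.sub_dvd_pow_sub_pow q 1 b
        simpa using this
      apply Nat.lt_of_mul_lt_mul_left (a := q - 1)
      have hS : (q-1) * ((q^b - 1)/(q-1)) = q^b - 1 := Nat.mul_div_cancel' hdvd
      have hrw : (q-1) * ((q^2 - 1) * ((q^a - 1) * (q^b - 1) / (q-1)))
          = (q^2 - 1) * ((q^a - 1) * (q^b - 1)) := by
        rw [Nat.mul_div_assoc _ hdvd]
        calc (q-1) * ((q^2-1) * ((q^a-1) * ((q^b-1)/(q-1))))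
            = (q^2-1) * ((q^a-1) * ((q-1) * ((q^b-1)/(q-1)))) := by ring
          _ = (q^2-1) * ((q^a-1) * (q^b-1)) := by rw [hS]
      rw [hrw]
      have he : m + 2 = a + b + 1 := by omega
      rw [he]
      exact key4 q a b hq4 ha2 hb2
    · -- odd case
      rw [if_pos hod]
      have hbound := prodOdd q m (by omega) hod
      have hq3 : q^3 < (q^2 - 1) * (q + 1) := by
        have e1 : 1 ≤ q^2 := by nlinarith
        have e : q^2 - 1 + 1 = q^2 := Nat.sub_add_cancel e1
        have e2 : (q^2 - 1 + 1) * (q+1) = q^2 * (q+1) := by rw [e]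
        nlinarith [e2, hq4]
      have hpos : 0 < q^(m-1) := Nat.pow_pos (by omega)
      calc q^(m+2) = q^3 * q^(m-1) := by rw [← pow_add]; congr 1; omega
        _ < ((q^2-1) * (q+1)) * q^(m-1) := (Nat.mul_lt_mul_right hpos).mpr hq3
        _ = (q^2-1) * ((q+1) * q^(m-1)) := by ring
        _ ≤ (q^2-1) * _ := Nat.mul_le_mul_left _ hbound
end

section
/- Let q be a power of 2 and let d_1, ..., d_ℓ be positive integers such that the 2-adic valuations (d_1)_2, ..., (d_ℓ)_2 are pairwise distinct. Let 2^{x_1} + ... + 2^{x_t} be the 2-adic expansion of d_1 + ... + d_ℓ (with x_1, ..., x_t pairwise distinct). Then ∏_{i=1}^{ℓ} (q^{d_i} + 1) ≤ ∏_{j=1}^{t} (q^{2^{x_j}} + 1). -/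
private lemma sum_range_two_pow (m : ℕ) : ∑ k ∈ Finset.range m, 2 ^ k = 2 ^ m - 1 := by
  induction m with
  | zero => simp
  | succ m ih =>
    have h1 : (1:ℕ) ≤ 2 ^ m := Nat.one_le_two_pow
    rw [Finset.sum_range_succ, ih, pow_succ]
    omega

private lemma sum_two_pow_lt {G : Finset ℕ} {m : ℕ} (h : ∀ k ∈ G, k < m) :
    ∑ k ∈ G, 2 ^ k < 2 ^ m := by
  have hsub : G ⊆ Finset.range m := fun k hk => Finset.mem_range.mpr (h k hk)
  have hle : ∑ k ∈ G, 2 ^ k ≤ ∑ k ∈ Finset.range m, 2 ^ k :=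
    Finset.sum_le_sum_of_subset hsub
  have h1 : (1:ℕ) ≤ 2 ^ m := Nat.one_le_two_pow
  rw [sum_range_two_pow] at hle
  omega

/-- Uniqueness of binary representations, Finset form. -/
private lemma sum_two_pow_inj : ∀ (n : ℕ) (G H : Finset ℕ),
    ∑ k ∈ G, 2 ^ k = n → ∑ k ∈ H, 2 ^ k = n → G = H := by
  intro n
  induction n using Nat.strong_induction_on with
  | _ n IH =>
    intro G H hG hH
    have hzero : ∀ K : Finset ℕ, ∑ k ∈ K, 2 ^ k = 0 → K = (∅ : Finset ℕ) := by
      intro K hK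
      by_contra hne
      obtain ⟨k, hk⟩ := Finset.nonempty_iff_ne_empty.mpr hne
      have : (2:ℕ) ^ k ≤ ∑ k ∈ K, 2 ^ k :=
        Finset.single_le_sum (fun i _ => Nat.zero_le _) hk
      have : (0:ℕ) < 2 ^ k := Nat.two_pow_pos k
      omega
    rcases Nat.eq_zero_or_pos n with h0 | hpos
    · subst h0; rw [hzero G hG, hzero H hH]
    · have hGne : G.Nonempty := by
        by_contra hne
        rw [Finset.not_nonempty_iff_eq_empty.mp hne] at hG; simp at hG; omega
      have hHne : H.Nonempty := by
        by_contra hne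
        rw [Finset.not_nonempty_iff_eq_empty.mp hne] at hH; simp at hH; omega
      -- max elements agree
      have key : ∀ (K : Finset ℕ) (hK : K.Nonempty), ∑ k ∈ K, 2 ^ k = n →
          2 ^ (K.max' hK) ≤ n ∧ n < 2 ^ (K.max' hK + 1) := by
        intro K hK hsum
        constructor
        · rw [← hsum]
          exact Finset.single_le_sum (fun i _ => Nat.zero_le _) (K.max'_mem hK)
        · rw [← hsum]
          exact sum_two_pow_lt (fun k hk => Nat.lt_succ_of_le (K.le_max' k hk))
      obtain ⟨hG1, hG2⟩ := key G hGne hG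
      obtain ⟨hH1, hH2⟩ := key H hHne hH
      set MG := G.max' hGne
      set MH := H.max' hHne
      have hMeq : MG = MH := by
        by_contra hne
        rcases Nat.lt_or_ge MG MH with h | h
        · have : (2:ℕ) ^ (MG + 1) ≤ 2 ^ MH := Nat.pow_le_pow_right (by norm_num) h
          omega
        · have h' : MH < MG := lt_of_le_of_ne h (Ne.symm hne)
          have : (2:ℕ) ^ (MH + 1) ≤ 2 ^ MG := Nat.pow_le_pow_right (by norm_num) h'
          omega
      have hGE : 2 ^ MG + ∑ k ∈ G.erase MG, 2 ^ k = n := by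
        rw [← hG]; exact Finset.add_sum_erase G (fun k => 2 ^ k) (G.max'_mem hGne)
      have hHE : 2 ^ MG + ∑ k ∈ H.erase MG, 2 ^ k = n := by
        rw [← hH, hMeq]; exact Finset.add_sum_erase H (fun k => 2 ^ k) (H.max'_mem hHne)
      have hpow : (0:ℕ) < 2 ^ MG := Nat.two_pow_pos _
      have herased : G.erase MG = H.erase MG := by
        apply IH (n - 2 ^ MG) (by omega) <;> omega
      have hHmem : MG ∈ H := by rw [hMeq]; exact H.max'_mem hHne
      calc G = insert MG (G.erase MG) := (Finset.insert_erase (G.max'_mem hGne)).symm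
        _ = insert MG (H.erase MG) := by rw [herased]
        _ = H := Finset.insert_erase hHmem

/-- Every natural number has a binary representation. -/
private lemma exists_bitset (n : ℕ) : ∃ G : Finset ℕ, ∑ k ∈ G, 2 ^ k = n := by
  induction n using Nat.strong_induction_on with
  | _ n IH =>
    rcases Nat.eq_zero_or_pos n with h0 | hpos
    · exact ⟨∅, by simp [h0]⟩
    · set p := Nat.log 2 n with hp
      have h1 : 2 ^ p ≤ n := Nat.pow_log_le_self 2 hpos.ne'
      have h2 : n < 2 ^ (p + 1) := Nat.lt_pow_succ_log_self (by norm_num) n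
      have hppos : (0:ℕ) < 2 ^ p := Nat.two_pow_pos _
      obtain ⟨G', hG'⟩ := IH (n - 2 ^ p) (by omega)
      have hpG' : p ∉ G' := by
        intro hmem
        have : (2:ℕ) ^ p ≤ ∑ k ∈ G', 2 ^ k :=
          Finset.single_le_sum (fun i _ => Nat.zero_le _) hmem
        rw [pow_succ] at h2
        omega
      exact ⟨insert p G', by rw [Finset.sum_insert hpG', hG']; omega⟩

/-- If `2^m` divides a sum of distinct powers of two, all exponents are at least `m`. -/
private lemma low_bits {G : Finset ℕ} {m : ℕ} (h : 2 ^ m ∣ ∑ k ∈ G, 2 ^ k) :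
    ∀ k ∈ G, m ≤ k := by
  by_contra hcon
  push_neg at hcon
  obtain ⟨k0, hk0G, hk0⟩ := hcon
  classical
  set L := G.filter (fun k => k < m) with hL
  have hsplit : ∑ k ∈ L, 2 ^ k + ∑ k ∈ G.filter (fun k => ¬ k < m), 2 ^ k
      = ∑ k ∈ G, 2 ^ k := Finset.sum_filter_add_sum_filter_not G _ _
  have hdvdHi : 2 ^ m ∣ ∑ k ∈ G.filter (fun k => ¬ k < m), 2 ^ k := by
    apply Finset.dvd_sum
    intro k hk
    have : m ≤ k := by have := (Finset.mem_filter.mp hk).2; omega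
    exact pow_dvd_pow 2 this
  have hdvdL : 2 ^ m ∣ ∑ k ∈ L, 2 ^ k := by
    have : 2 ^ m ∣ (∑ k ∈ L, 2 ^ k + ∑ k ∈ G.filter (fun k => ¬ k < m), 2 ^ k) := by
      rw [hsplit]; exact h
    exact (Nat.dvd_add_iff_left hdvdHi).mpr this
  have hLlt : ∑ k ∈ L, 2 ^ k < 2 ^ m :=
    sum_two_pow_lt (fun k hk => (Finset.mem_filter.mp hk).2)
  have hk0L : k0 ∈ L := Finset.mem_filter.mpr ⟨hk0G, hk0⟩
  have hLpos : 0 < ∑ k ∈ L, 2 ^ k := by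
    have : (2:ℕ) ^ k0 ≤ ∑ k ∈ L, 2 ^ k :=
      Finset.single_le_sum (fun i _ => Nat.zero_le _) hk0L
    have : (0:ℕ) < 2 ^ k0 := Nat.two_pow_pos _
    omega
  have := Nat.le_of_dvd hLpos hdvdL
  omega

private lemma geom_sum_lt' {q : ℕ} (hq : 2 ≤ q) (K : ℕ) :
    ∑ k ∈ Finset.range K, q ^ k < q ^ K := by
  induction K with
  | zero => simp
  | succ K ih =>
    rw [Finset.sum_range_succ, pow_succ]
    have : q ^ K * 2 ≤ q ^ K * q := Nat.mul_le_mul_left _ hq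
    omega

/-- Expansion of the product into a sum of powers of `q`. -/
private lemma prod_expand (q : ℕ) (F : Finset ℕ) :
    ∏ k ∈ F, (q ^ 2 ^ k + 1) = ∑ T ∈ F.powerset, q ^ (∑ k ∈ T, 2 ^ k) := by
  rw [Finset.prod_add]
  refine Finset.sum_congr rfl (fun T _ => ?_)
  rw [Finset.prod_const_one, mul_one, Finset.prod_pow_eq_pow_sum]

/-- Lower bound on a nonempty product. -/
private lemma prod_lower (q : ℕ) {H : Finset ℕ} (hH : H.Nonempty) :
    q ^ (∑ k ∈ H, 2 ^ k) + 1 ≤ ∏ k ∈ H, (q ^ 2 ^ k + 1) := by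
  rw [prod_expand]
  have hpair : ({∅, H} : Finset (Finset ℕ)) ⊆ H.powerset := by
    intro T hT
    rcases Finset.mem_insert.mp hT with h | h
    · subst h; exact Finset.empty_mem_powerset H
    · rw [Finset.mem_singleton.mp h]; exact Finset.mem_powerset_self H
  have hne : (∅ : Finset ℕ) ≠ H := by
    intro h; rw [← h] at hH; exact Finset.not_nonempty_empty hH
  calc q ^ (∑ k ∈ H, 2 ^ k) + 1
      = ∑ T ∈ ({∅, H} : Finset (Finset ℕ)), q ^ (∑ k ∈ T, 2 ^ k) := by
        rw [Finset.sum_pair hne]; simp [add_comm]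
    _ ≤ ∑ T ∈ H.powerset, q ^ (∑ k ∈ T, 2 ^ k) :=
        Finset.sum_le_sum_of_subset hpair

/-- The key lemma: absorbing a factor `q^a + 1` into a binary-expansion product. -/
private lemma dagger {q : ℕ} (hq : 2 ≤ q) (v a : ℕ) (ha : 2 ^ v ∣ a)
    (ha' : ¬ 2 ^ (v + 1) ∣ a) (F G : Finset ℕ) (hF : ∀ k ∈ F, v < k)
    (hG : ∑ k ∈ G, 2 ^ k = a + ∑ k ∈ F, 2 ^ k) :
    (q ^ a + 1) * ∏ k ∈ F, (q ^ 2 ^ k + 1) ≤ ∏ k ∈ G, (q ^ 2 ^ k + 1) := by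
  classical
  have ha0 : a ≠ 0 := by rintro rfl; exact ha' (dvd_zero _)
  have hvpos : (0:ℕ) < 2 ^ v := Nat.two_pow_pos _
  have hvle : 2 ^ v ≤ a := Nat.le_of_dvd (Nat.pos_of_ne_zero ha0) ha
  set b := ∑ k ∈ F, 2 ^ k with hb
  set n := a + b with hn
  have hbdvd : 2 ^ (v + 1) ∣ b := Finset.dvd_sum (fun k hk => pow_dvd_pow 2 (hF k hk))
  have hndvd : 2 ^ v ∣ n := dvd_add ha (dvd_trans (pow_dvd_pow 2 (Nat.le_succ v)) hbdvd)
  have hkG : ∀ k ∈ G, v ≤ k := low_bits (by rw [hG]; exact hndvd)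
  have hvG : v ∈ G := by
    by_contra hvG
    have hdd : 2 ^ (v+1) ∣ ∑ k ∈ G, 2 ^ k := by
      apply Finset.dvd_sum
      intro k hk
      have : v < k := lt_of_le_of_ne (hkG k hk) (by rintro rfl; exact hvG hk)
      exact pow_dvd_pow 2 this
    rw [hG] at hdd
    exact ha' ((Nat.dvd_add_iff_left hbdvd).mpr hdd)
  set G' := G.erase v with hG'
  have hsplitG : 2 ^ v + ∑ k ∈ G', 2 ^ k = n := by
    have h := Finset.add_sum_erase G (fun k => 2 ^ k) hvG
    rw [hG'] ; omega
  have hprodG : ∏ k ∈ G, (q ^ 2 ^ k + 1) = (q ^ 2 ^ v + 1) * ∏ k ∈ G', (q ^ 2 ^ k + 1) :=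
    (Finset.mul_prod_erase G _ hvG).symm
  rcases eq_or_ne a (2 ^ v) with hav | hav
  · -- a = 2^v exactly: the two sides are equal
    have hsG' : ∑ k ∈ G', 2 ^ k = b := by omega
    have hFG' : F = G' := sum_two_pow_inj b F G' rfl hsG'
    rw [hprodG, ← hFG', hav]
  · have hav' : 2 ^ v < a := lt_of_le_of_ne hvle (Ne.symm hav)
    set K := n - 2 ^ v with hK
    have hKval : ∑ k ∈ G', 2 ^ k = K := by omega
    have hKpos : 0 < K := by omega
    have hG'ne : G'.Nonempty := by
      by_contra hne
      rw [Finset.not_nonempty_iff_eq_empty.mp hne] at hKval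
      simp at hKval; omega
    have hRHS : (q ^ 2 ^ v + 1) * (q ^ K + 1) ≤ ∏ k ∈ G, (q ^ 2 ^ k + 1) := by
      rw [hprodG]
      refine Nat.mul_le_mul_left _ ?_
      rw [← hKval]; exact prod_lower q hG'ne
    -- expansion of the left product
    have hinj : ∀ T ∈ F.powerset, ∀ T' ∈ F.powerset,
        (∑ k ∈ T, 2 ^ k) = (∑ k ∈ T', 2 ^ k) → T = T' :=
      fun T _ T' _ h => sum_two_pow_inj _ T T' rfl h.symm
    set E1 := F.powerset.image (fun T => ∑ k ∈ T, 2 ^ k) with hE1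
    have hRF : ∏ k ∈ F, (q ^ 2 ^ k + 1) = ∑ e ∈ E1, q ^ e := by
      rw [prod_expand, hE1, Finset.sum_image hinj]
    have hbE1 : b ∈ E1 := Finset.mem_image.mpr ⟨F, Finset.mem_powerset_self F, rfl⟩
    have hE1dvd : ∀ e ∈ E1, 2 ^ (v+1) ∣ e := by
      intro e he
      obtain ⟨T, hT, rfl⟩ := Finset.mem_image.mp he
      exact Finset.dvd_sum (fun k hk => pow_dvd_pow 2 (hF k (Finset.mem_powerset.mp hT hk)))
    have hE1le : ∀ e ∈ E1, e ≤ b := by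
      intro e he
      obtain ⟨T, hT, rfl⟩ := Finset.mem_image.mp he
      exact Finset.sum_le_sum_of_subset (Finset.mem_powerset.mp hT)
    have hE1small : ∀ e ∈ E1.erase b, e + 2 ^ (v+1) ≤ b := by
      intro e he
      obtain ⟨heb, heE1⟩ := Finset.mem_erase.mp he
      obtain ⟨T, hT, rfl⟩ := Finset.mem_image.mp heE1
      have hTF : T ⊆ F := Finset.mem_powerset.mp hT
      have hTne : T ≠ F := by rintro rfl; exact heb rfl
      obtain ⟨k, hkF, hkT⟩ :=
        Finset.exists_of_ssubset (HasSubset.Subset.ssubset_of_ne hTF hTne)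
      have hins : insert k T ⊆ F := Finset.insert_subset hkF hTF
      have hle : ∑ j ∈ insert k T, 2 ^ j ≤ b := Finset.sum_le_sum_of_subset hins
      have hins2 : ∑ j ∈ insert k T, 2 ^ j = 2 ^ k + ∑ j ∈ T, 2 ^ j :=
        Finset.sum_insert hkT
      have hk2 : 2 ^ (v+1) ≤ 2 ^ k := Nat.pow_le_pow_right (by norm_num) (hF k hkF)
      omega
    set E2 := (E1.erase b).image (fun e => a + e) with hE2
    have hsum2 : ∑ e ∈ E1.erase b, q ^ (a + e) = ∑ e ∈ E2, q ^ e := by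
      rw [hE2, Finset.sum_image (fun x _ y _ h => by omega)]
    have hdisj : Disjoint E2 E1 := by
      rw [Finset.disjoint_left]
      intro z hz hz1
      obtain ⟨e, he, rfl⟩ := Finset.mem_image.mp hz
      have h1 : 2 ^ (v+1) ∣ e := hE1dvd e (Finset.mem_of_mem_erase he)
      have h2 : 2 ^ (v+1) ∣ (a + e) := hE1dvd _ hz1
      exact ha' ((Nat.dvd_add_iff_left h1).mpr h2)
    have hEsub : E2 ∪ E1 ⊆ Finset.range K := by
      intro z hz
      rw [Finset.mem_range]
      have hpow2 : (2:ℕ) ^ (v+1) = 2 * 2 ^ v := by rw [pow_succ]; ring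
      rcases Finset.mem_union.mp hz with h | h
      · obtain ⟨e, he, rfl⟩ := Finset.mem_image.mp h
        have := hE1small e he
        omega
      · have := hE1le z h
        omega
    have hmulexp : q ^ a * ∑ e ∈ E1, q ^ e = q ^ n + ∑ e ∈ E2, q ^ e := by
      rw [Finset.mul_sum]
      have hcong : ∀ e ∈ E1, q ^ a * q ^ e = q ^ (a + e) :=
        fun e _ => (pow_add q a e).symm
      rw [Finset.sum_congr rfl hcong, ← Finset.add_sum_erase E1 _ hbE1, hsum2, hn]
    calc (q ^ a + 1) * ∏ k ∈ F, (q ^ 2 ^ k + 1)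
        = q ^ a * (∑ e ∈ E1, q ^ e) + ∑ e ∈ E1, q ^ e := by rw [hRF]; ring
      _ = q ^ n + (∑ e ∈ E2, q ^ e + ∑ e ∈ E1, q ^ e) := by rw [hmulexp]; ring
      _ = q ^ n + ∑ e ∈ E2 ∪ E1, q ^ e := by rw [Finset.sum_union hdisj]
      _ ≤ q ^ n + ∑ e ∈ Finset.range K, q ^ e :=
          Nat.add_le_add_left (Finset.sum_le_sum_of_subset hEsub) _
      _ ≤ q ^ n + q ^ K := Nat.add_le_add_left (le_of_lt (geom_sum_lt' hq K)) _
      _ ≤ (q ^ 2 ^ v + 1) * (q ^ K + 1) := by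
          have hnn : 2 ^ v + K = n := by omega
          have hexp : (q ^ 2 ^ v + 1) * (q ^ K + 1)
              = q ^ (2 ^ v) * q ^ K + q ^ 2 ^ v + q ^ K + 1 := by ring
          rw [hexp, ← pow_add, hnn]
          omega
      _ ≤ ∏ k ∈ G, (q ^ 2 ^ k + 1) := hRHS

private lemma main_aux {q : ℕ} (hq : 2 ≤ q) (n : ℕ) :
    ∀ {ι : Type} (s : Finset ι) (d : ι → ℕ), (∀ i ∈ s, 0 < d i) →
      (∀ i ∈ s, ∀ j ∈ s, i ≠ j → (d i).factorization 2 ≠ (d j).factorization 2) →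
      ∑ i ∈ s, d i = n → ∀ G : Finset ℕ, ∑ k ∈ G, 2 ^ k = n →
      ∏ i ∈ s, (q ^ d i + 1) ≤ ∏ k ∈ G, (q ^ 2 ^ k + 1) := by
  induction n using Nat.strong_induction_on with
  | _ n IH =>
    intro ι s d hd hdist hsum G hG
    rcases s.eq_empty_or_nonempty with rfl | hs
    · simp only [Finset.prod_empty]
      exact Finset.one_le_prod' (fun k _ => by omega)
    · classical
      set V := s.image (fun i => (d i).factorization 2) with hV
      have hVne : V.Nonempty := hs.image _
      set v := V.min' hVne with hv
      obtain ⟨i0, hi0s, hi0⟩ := Finset.mem_image.mp (V.min'_mem hVne)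
      rw [← hv] at hi0
      set a := d i0 with haa
      set s' := s.erase i0 with hs'
      set b := ∑ i ∈ s', d i with hbb
      have ha0 : a ≠ 0 := (hd i0 hi0s).ne'
      have hsum' : a + b = n := by
        rw [← hsum, hbb, haa, hs']; exact Finset.add_sum_erase s d hi0s
      have hva : 2 ^ v ∣ a := by rw [← hi0]; exact Nat.ordProj_dvd a 2
      have hva' : ¬ 2 ^ (v + 1) ∣ a := by
        rw [← hi0]; exact Nat.pow_succ_factorization_not_dvd ha0 Nat.prime_two
      have hbdvd : 2 ^ (v + 1) ∣ b := by
        rw [hbb]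
        apply Finset.dvd_sum
        intro i hi
        have his : i ∈ s := Finset.mem_of_mem_erase hi
        have hine : i ≠ i0 := Finset.ne_of_mem_erase hi
        have h1 : v ≤ (d i).factorization 2 := by
          rw [hv]; exact V.min'_le _ (by rw [hV]; exact Finset.mem_image_of_mem _ his)
        have h2 : (d i).factorization 2 ≠ v := by
          intro h
          exact hdist i his i0 hi0s hine (h.trans hi0.symm)
        calc (2:ℕ) ^ (v+1) ∣ 2 ^ ((d i).factorization 2) := pow_dvd_pow 2 (by omega)
          _ ∣ d i := Nat.ordProj_dvd _ 2
      obtain ⟨Gb, hGb⟩ := exists_bitset b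
      have hFb : ∀ k ∈ Gb, v < k := by
        intro k hk
        have := low_bits (G := Gb) (m := v+1) (by rw [hGb]; exact hbdvd) k hk
        omega
      have hIH : ∏ i ∈ s', (q ^ d i + 1) ≤ ∏ k ∈ Gb, (q ^ 2 ^ k + 1) :=
        IH b (by omega) s' d
          (fun i hi => hd i (Finset.mem_of_mem_erase hi))
          (fun i hi j hj hij =>
            hdist i (Finset.mem_of_mem_erase hi) j (Finset.mem_of_mem_erase hj) hij)
          hbb.symm Gb hGb
      calc ∏ i ∈ s, (q ^ d i + 1) = (q ^ a + 1) * ∏ i ∈ s', (q ^ d i + 1) := by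
            rw [haa, hs']; exact (Finset.mul_prod_erase s _ hi0s).symm
        _ ≤ (q ^ a + 1) * ∏ k ∈ Gb, (q ^ 2 ^ k + 1) := Nat.mul_le_mul_left _ hIH
        _ ≤ ∏ k ∈ G, (q ^ 2 ^ k + 1) :=
            dagger hq v a hva hva' Gb G hFb (by rw [hG, ← hsum', hGb])

/-- Lemma 3.1: if d_1, …, d_ℓ are positive integers with pairwise distinct 2-parts and
2^(x_1) + … + 2^(x_t) is the 2-adic expansion of d_1 + … + d_ℓ, then
∏ (q^(d_i) + 1) ≤ ∏ (q^(2^(x_j)) + 1). -/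
theorem prod_pow_add_one_le (f q : ℕ) (hf : 1 ≤ f) (hq : q = 2 ^ f)
    (l t : ℕ) (d : Fin l → ℕ) (hd : ∀ i, 0 < d i)
    (hdist : ∀ i j, i ≠ j →
      2 ^ ((d i).factorization 2) ≠ 2 ^ ((d j).factorization 2))
    (x : Fin t → ℕ) (hx : Function.Injective x)
    (hsum : ∑ j, 2 ^ x j = ∑ i, d i) :
    ∏ i, (q ^ d i + 1) ≤ ∏ j, (q ^ 2 ^ x j + 1) := by
  classical
  have hq2 : 2 ≤ q := by
    rw [hq]
    calc (2:ℕ) = 2 ^ 1 := (pow_one 2).symm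
      _ ≤ 2 ^ f := Nat.pow_le_pow_right (by norm_num) hf
  have hdist' : ∀ i ∈ (Finset.univ : Finset (Fin l)), ∀ j ∈ (Finset.univ : Finset (Fin l)),
      i ≠ j → (d i).factorization 2 ≠ (d j).factorization 2 := by
    intro i _ j _ hij h
    exact hdist i j hij (by rw [h])
  have hxinj : ∀ j1 ∈ (Finset.univ : Finset (Fin t)), ∀ j2 ∈ (Finset.univ : Finset (Fin t)),
      x j1 = x j2 → j1 = j2 := fun j1 _ j2 _ h => hx h
  set G := Finset.univ.image x with hG
  have hGsum : ∑ k ∈ G, 2 ^ k = ∑ i, d i := by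
    rw [hG, Finset.sum_image hxinj, hsum]
  calc ∏ i, (q ^ d i + 1)
      ≤ ∏ k ∈ G, (q ^ 2 ^ k + 1) :=
        main_aux hq2 (∑ i, d i) Finset.univ d (fun i _ => hd i) hdist' rfl G hGsum
    _ = ∏ j, (q ^ 2 ^ x j + 1) := by rw [hG, Finset.prod_image hxinj]
end

section
/- Let q > 2 be a power of 2, let m ≥ 4 be an even integer, and let ℓ be the largest positive integer with 2^ℓ + 2^{ℓ-1} ≤ m. Then lcm(q + 1, q^2 + 1, q^4 + 1, ..., q^{2^{ℓ-1}} + 1, q^{m - 2^ℓ + 1} - 1) = (q^{m - 2^ℓ + 1} - 1)·(q^{2^ℓ} - 1)/(q - 1), i.e. the lcm of the numbers q^{2^i}+1 for 0 ≤ i ≤ ℓ-1 together with q^{m-2^ℓ+1}-1 equals (q^{m-2^ℓ+1}-1)(q^{2^ℓ}-1)/(q-1). -/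
private lemma aux_sq (y : ℕ) (hy : 1 ≤ y) : (y - 1) * (y + 1) = y ^ 2 - 1 := by
  rcases Nat.exists_eq_add_of_le hy with ⟨x, rfl⟩
  have h : (1 + x) ^ 2 = x * x + 2 * x + 1 := by ring
  have h4 : 1 + x - 1 = x := by omega
  rw [h, Nat.add_sub_cancel, h4]
  ring

/-- If `d` divides `q^a - 1` and `q^b - 1` with `gcd a b = 1`, then `d ∣ q - 1`. -/
private lemma aux_dvd_sub_one {q d a b : ℕ} (hq : 1 ≤ q)
    (ha : d ∣ q ^ a - 1) (hb : d ∣ q ^ b - 1) (hab : Nat.gcd a b = 1) :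
    d ∣ q - 1 := by
  have key : ∀ m, d ∣ q ^ m - 1 → ((q : ZMod d)) ^ m = 1 := by
    intro m hm
    have h1 : (q : ℕ) ^ m ≡ 1 [MOD d] :=
      ((Nat.modEq_iff_dvd' (Nat.one_le_pow _ _ hq)).2 hm).symm
    have := (ZMod.natCast_eq_natCast_iff _ _ _).2 h1
    push_cast at this
    exact this
  have hord : orderOf ((q : ZMod d)) ∣ Nat.gcd a b :=
    Nat.dvd_gcd (orderOf_dvd_of_pow_eq_one (key a ha)) (orderOf_dvd_of_pow_eq_one (key b hb))
  rw [hab, Nat.dvd_one] at hord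
  have hq1 : ((q : ℕ) : ZMod d) = ((1 : ℕ) : ZMod d) := by
    simpa using orderOf_eq_one_iff.1 hord
  have : q ≡ 1 [MOD d] := (ZMod.natCast_eq_natCast_iff _ _ _).1 hq1
  exact (Nat.modEq_iff_dvd' hq).1 this.symm

private lemma aux_coprime_prod {x : ℕ} : ∀ (L : List ℕ), (∀ y ∈ L, Nat.Coprime x y) →
    Nat.Coprime x L.prod := by
  intro L
  induction L with
  | nil => simp
  | cons a t ih =>
    intro h
    rw [List.prod_cons]
    exact (h a (by simp)).mul_right (ih fun y hy => h y (List.mem_cons_of_mem _ hy))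

private lemma aux_foldr_dvd (b : ℕ) : ∀ (L : List ℕ), L.foldr Nat.lcm b ∣ L.prod * b := by
  intro L
  induction L with
  | nil => simp
  | cons a t ih =>
    simp only [List.foldr_cons, List.prod_cons]
    exact Nat.lcm_dvd (Dvd.dvd.mul_right (dvd_mul_right a t.prod) b) (ih.trans (by
      rw [mul_assoc]; exact dvd_mul_left _ _))

private lemma aux_foldr_lcm (b : ℕ) : ∀ (L : List ℕ), L.Pairwise Nat.Coprime →
    (∀ x ∈ L, Nat.Coprime x b) → L.foldr Nat.lcm b = L.prod * b := by
  intro L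
  induction L with
  | nil => simp
  | cons a t ih =>
    intro hp hb
    rw [List.pairwise_cons] at hp
    have hcop : Nat.Coprime a (t.foldr Nat.lcm b) := by
      have : Nat.Coprime a (t.prod * b) :=
        (aux_coprime_prod t hp.1).mul_right (hb a (by simp))
      exact this.coprime_dvd_right (aux_foldr_dvd b t)
    rw [List.foldr_cons, Nat.Coprime.lcm_eq_mul hcop,
      ih hp.2 (fun x hx => hb x (List.mem_cons_of_mem _ hx)), List.prod_cons, mul_assoc]

/-- For q > 2 a power of 2, m ≥ 4 even and ℓ the largest positive integer with
2^ℓ + 2^(ℓ-1) ≤ m, the lcm of q+1, q^2+1, …, q^(2^(ℓ-1))+1 and q^(m-2^ℓ+1)-1 equals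
(q^(m-2^ℓ+1) - 1)(q^(2^ℓ) - 1)/(q - 1). -/
theorem lcm_torus_orders (f q m l : ℕ) (hf : 1 ≤ f) (hq : q = 2 ^ f) (hq2 : 2 < q)
    (hm : 4 ≤ m) (hme : Even m)
    (hl : 0 < l) (hlm : 2 ^ l + 2 ^ (l - 1) ≤ m)
    (hlmax : ∀ k, 0 < k → 2 ^ k + 2 ^ (k - 1) ≤ m → k ≤ l) :
    ((List.range l).map fun i => q ^ 2 ^ i + 1).foldr Nat.lcm (q ^ (m - 2 ^ l + 1) - 1) =
      (q ^ (m - 2 ^ l + 1) - 1) * (q ^ 2 ^ l - 1) / (q - 1) := by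
  have hq1 : 1 ≤ q := by omega
  set n := m - 2 ^ l + 1 with hn
  -- n is odd
  have h2l : 2 ^ l ≤ m := by have := Nat.pow_pos (n := l-1) (show 0 < 2 by norm_num); omega
  have h2le : Even (2 ^ l) := Nat.even_pow.2 ⟨even_two, by omega⟩
  have hnodd : Odd n := by
    rcases hme with ⟨a, ha⟩
    rcases h2le with ⟨b, hb⟩
    refine ⟨a - b, by omega⟩
  -- q is even, so q^k is even for k ≥ 1, and q^k+1, q^k-1 odd
  have hqe : Even q := by
    rw [hq]; exact Nat.even_pow.2 ⟨even_two, by omega⟩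
  have hpow_even : ∀ k, 1 ≤ k → Even (q ^ k) := fun k hk =>
    Nat.even_pow.2 ⟨hqe, by omega⟩
  -- key divisibility: q^(2^i)+1 ∣ q^(2^(i+1)) - 1
  have hdvd1 : ∀ i : ℕ, q ^ 2 ^ i + 1 ∣ q ^ 2 ^ (i+1) - 1 := by
    intro i
    have : q ^ 2 ^ (i+1) - 1 = (q ^ 2 ^ i - 1) * (q ^ 2 ^ i + 1) := by
      rw [pow_succ, pow_mul, ← aux_sq _ (Nat.one_le_pow _ _ (by omega))]
    rw [this]; exact dvd_mul_left _ _
  -- coprimality of q^(2^i)+1 with q^n - 1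
  have hcop_b : ∀ i : ℕ, Nat.Coprime (q ^ 2 ^ i + 1) (q ^ n - 1) := by
    intro i
    set d := Nat.gcd (q ^ 2 ^ i + 1) (q ^ n - 1) with hd
    have hda : d ∣ q ^ 2 ^ i + 1 := Nat.gcd_dvd_left _ _
    have hd1 : d ∣ q ^ 2 ^ (i+1) - 1 := hda.trans (hdvd1 i)
    have hd2 : d ∣ q ^ n - 1 := Nat.gcd_dvd_right _ _
    have hgcd : Nat.gcd (2 ^ (i+1)) n = 1 := by
      have : Nat.Coprime 2 n := Nat.coprime_two_left.2 hnodd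
      exact Nat.Coprime.pow_left _ this
    have hdq : d ∣ q - 1 := aux_dvd_sub_one hq1 hd1 hd2 hgcd
    -- d ∣ q - 1 ∣ q^(2^i) - 1, and d ∣ q^(2^i)+1, so d ∣ 2; but d divides an odd number
    have hdq2 : d ∣ q ^ 2 ^ i - 1 := hdq.trans (by
      simpa using Nat.sub_dvd_pow_sub_pow q 1 (2 ^ i))
    have hd2' : d ∣ 2 := by
      have := Nat.dvd_sub hda hdq2
      have h1 : 1 ≤ q ^ 2 ^ i := Nat.one_le_pow _ _ (by omega)
      have heq : q ^ 2 ^ i + 1 - (q ^ 2 ^ i - 1) = 2 := by omega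
      rwa [heq] at this
    have hodd : Odd (q ^ 2 ^ i + 1) := (hpow_even (2^i) (Nat.one_le_two_pow)).add_one
    rcases (Nat.dvd_prime Nat.prime_two).1 hd2' with h | h
    · exact h
    · exfalso
      have : (2:ℕ) ∣ q ^ 2 ^ i + 1 := h ▸ hda
      exact (Nat.not_even_iff_odd.2 hodd) (even_iff_two_dvd.2 this)
  -- pairwise coprimality
  have hcop_p : ∀ i j : ℕ, i < j → Nat.Coprime (q ^ 2 ^ i + 1) (q ^ 2 ^ j + 1) := by
    intro i j hij
    set d := Nat.gcd (q ^ 2 ^ i + 1) (q ^ 2 ^ j + 1) with hd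
    have hda : d ∣ q ^ 2 ^ i + 1 := Nat.gcd_dvd_left _ _
    have hdb : d ∣ q ^ 2 ^ j + 1 := Nat.gcd_dvd_right _ _
    have hd1 : d ∣ q ^ 2 ^ j - 1 := by
      refine (hda.trans (hdvd1 i)).trans ?_
      have h2 : 2 ^ (i+1) ∣ 2 ^ j := pow_dvd_pow 2 hij
      rcases h2 with ⟨c, hc⟩
      rw [hc]
      simpa only [one_pow, pow_mul] using Nat.sub_dvd_pow_sub_pow (q ^ 2 ^ (i+1)) 1 c
    have hd2' : d ∣ 2 := by
      have := Nat.dvd_sub hdb hd1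
      have h1 : 1 ≤ q ^ 2 ^ j := Nat.one_le_pow _ _ (by omega)
      have heq : q ^ 2 ^ j + 1 - (q ^ 2 ^ j - 1) = 2 := by omega
      rwa [heq] at this
    have hodd : Odd (q ^ 2 ^ i + 1) := (hpow_even (2^i) (Nat.one_le_two_pow)).add_one
    rcases (Nat.dvd_prime Nat.prime_two).1 hd2' with h | h
    · exact h
    · exfalso
      have : (2:ℕ) ∣ q ^ 2 ^ i + 1 := h ▸ hda
      exact (Nat.not_even_iff_odd.2 hodd) (even_iff_two_dvd.2 this)
  -- the product formula
  have hprod : ∀ k : ℕ, (((List.range k).map fun i => q ^ 2 ^ i + 1).prod) * (q - 1)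
      = q ^ 2 ^ k - 1 := by
    intro k
    induction k with
    | zero => simp
    | succ k ih =>
      rw [List.range_succ, List.map_append, List.prod_append]
      simp only [List.map_cons, List.map_nil, List.prod_cons, List.prod_nil, mul_one]
      rw [mul_right_comm, ih, pow_succ, pow_mul, ← aux_sq _ (Nat.one_le_pow _ _ (by omega))]
  -- apply the foldr lemma
  have hpair : (((List.range l).map fun i => q ^ 2 ^ i + 1)).Pairwise Nat.Coprime := by
    refine List.Pairwise.map _ (fun a b hab => hcop_p a b hab) ?_
    exact List.pairwise_lt_range
  have hbco : ∀ x ∈ ((List.range l).map fun i => q ^ 2 ^ i + 1),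
      Nat.Coprime x (q ^ n - 1) := by
    intro x hx
    simp only [List.mem_map, List.mem_range] at hx
    rcases hx with ⟨i, _, rfl⟩
    exact hcop_b i
  rw [aux_foldr_lcm _ _ hpair hbco]
  rw [← hprod l, ← mul_assoc, Nat.mul_div_cancel _ (by omega : 0 < q - 1),
    mul_comm]
end

section
/- Let q be a power of 2, let a ≥ 1 be an integer and let b ≥ 1 be an odd integer. Then q^a + 1 divides q^{ab} + 1, and if (q, a, b) ≠ (2, 1, 3) then (q^{ab} + 1)/(q^a + 1) ≥ 2^{⌈log₂ b⌉}. -/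
/-- Lemma 2.4(ii) of [DGPS]: for b odd, q^a + 1 divides q^(ab) + 1, and
(q^(ab) + 1)/(q^a + 1) ≥ 2^⌈log₂ b⌉ unless (q, a, b) = (2, 1, 3). -/
theorem pow_add_one_dvd_and_quot_ge_odd (f q a b : ℕ) (hf : 1 ≤ f) (hq : q = 2 ^ f)
    (ha : 1 ≤ a) (hb : 1 ≤ b) (hbodd : Odd b) :
    q ^ a + 1 ∣ q ^ (a * b) + 1 ∧
      (¬(q = 2 ∧ a = 1 ∧ b = 3) →
        2 ^ Nat.clog 2 b ≤ (q ^ (a * b) + 1) / (q ^ a + 1)) := by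
  set x := q ^ a with hx
  have hxb : q ^ (a * b) = x ^ b := by rw [hx, ← pow_mul]
  have hdvd : x + 1 ∣ x ^ b + 1 := by
    simpa using hbodd.nat_add_dvd_pow_add_pow x 1
  have hxpow : x = 2 ^ (f * a) := by rw [hx, hq, ← pow_mul]
  have hx2 : 2 ≤ x := by
    rw [hxpow]
    calc 2 = 2 ^ 1 := rfl
    _ ≤ 2 ^ (f * a) := Nat.pow_le_pow_right (by norm_num)
        (Nat.one_le_iff_ne_zero.mpr (by positivity))
  refine ⟨hxb ▸ hdvd, fun hne => ?_⟩
  rw [hxb]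
  obtain ⟨k, hk⟩ := hdvd
  have hxpos : 0 < x + 1 := by omega
  rw [hk, Nat.mul_div_cancel_left _ hxpos]
  -- case b = 1
  rcases eq_or_lt_of_le hb with hb1 | hb3
  · have hc0 : Nat.clog 2 b = 0 := by rw [← hb1]; simp
    rw [hc0]
    simp only [← hb1, pow_one] at hk
    nlinarith
  -- b ≥ 3 since b odd
  have hb3 : 3 ≤ b := by rcases hbodd with ⟨m, hm⟩; omega
  set c := Nat.clog 2 b with hc
  have hfa : 1 ≤ f * a := Nat.one_le_iff_ne_zero.mpr (by positivity)
  -- key exponent inequality: c + 1 ≤ f * a * (b - 1)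
  have hkey : c + 1 ≤ f * a * (b - 1) := by
    rcases eq_or_lt_of_le hb3 with hb3' | hb5
    · -- b = 3, excluded case gives f * a ≥ 2
      have hfa2 : 2 ≤ f * a := by
        rcases Nat.lt_or_ge (f * a) 2 with h | h
        · exfalso
          have hf1 : f = 1 := by nlinarith
          have ha1 : a = 1 := by nlinarith
          exact hne ⟨by rw [hq, hf1]; rfl, ha1, hb3'.symm⟩
        · exact h
      have hc2 : c = 2 := by rw [hc, ← hb3']; simp [Nat.clog]; rfl
      rw [← hb3']
      omega
    · -- b ≥ 5 (odd, > 3): c ≤ b - 2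
      have hb5 : 5 ≤ b := by rcases hbodd with ⟨m, hm⟩; omega
      have hble : b ≤ 2 ^ (b - 2) := by
        have h1 : b - 3 < 2 ^ (b - 3) := Nat.lt_two_pow_self
        have h2 : 2 * (b - 2) ≤ 2 * 2 ^ (b - 3) := by omega
        have h3 : 2 * 2 ^ (b - 3) = 2 ^ (b - 2) := by
          rw [← pow_succ']
          congr 1
          omega
        omega
      have hcle : c ≤ b - 2 := (Nat.clog_le_iff_le_pow (by norm_num)).mpr hble
      calc c + 1 ≤ b - 1 := by omega
      _ ≤ f * a * (b - 1) := Nat.le_mul_of_pos_left _ (by omega)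
  -- conclude: 2^(c+1) ≤ x^(b-1), hence k > 2^c
  have h1 : 2 ^ (c + 1) ≤ x ^ (b - 1) := by
    rw [hxpow, ← pow_mul]
    exact Nat.pow_le_pow_right (by norm_num) hkey
  have h2 : x ^ (b - 1) * x = x ^ b := by
    rw [← pow_succ]
    congr 1
    omega
  have h3 : (x + 1) * k ≤ 2 * x * k := by nlinarith
  have h4 : 2 ^ (c + 1) * x ≤ x ^ b := by
    calc 2 ^ (c + 1) * x ≤ x ^ (b - 1) * x := Nat.mul_le_mul_right _ h1
    _ = x ^ b := h2
  have h5 : 2 * 2 ^ c * x < 2 * x * k := by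
    have : 2 * 2 ^ c * x = 2 ^ (c + 1) * x := by ring
    omega
  have hxpos' : 0 < x := by omega
  nlinarith
end

section
/- Let q be a power of 2, let a ≥ 1 be an integer and let b ≥ 1 be an even integer. Then q^a + 1 divides q^{ab} - 1, and if (q, a, b) ≠ (2, 1, 2) then (q^{ab} - 1)/(q^a + 1) ≥ 2^{⌈log₂ b⌉}. -/
lemma geom_nat (y : ℕ) (hy : 1 ≤ y) (k : ℕ) :
    (y - 1) * ∑ i ∈ Finset.range k, y ^ i = y ^ k - 1 := by
  induction k with
  | zero => simp
  | succ k ih =>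
    rw [Finset.sum_range_succ, Nat.mul_add, ih]
    have hp : 1 ≤ y ^ k := Nat.one_le_pow _ _ hy
    have h2 : (y - 1) * y ^ k = y * y ^ k - y ^ k := by
      rw [Nat.sub_mul, Nat.one_mul]
    rw [h2, pow_succ]
    have h3 : y ^ k ≤ y * y ^ k := Nat.le_mul_of_pos_left _ hy
    have h4 : y ^ k * y = y * y ^ k := Nat.mul_comm _ _
    omega

lemma le_two_pow_sub_two (b : ℕ) (hb : 4 ≤ b) : b ≤ 2 ^ (b - 2) := by
  induction b with
  | zero => omega
  | succ n ih =>
    rcases Nat.lt_or_ge n 4 with h | h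
    · interval_cases n <;> simp_all
    · have := ih (by omega)
      have h2 : n + 1 - 2 = (n - 2) + 1 := by omega
      rw [h2, pow_succ]
      omega

/-- Lemma 2.4(iii) of [DGPS]: for b even, q^a + 1 divides q^(ab) - 1, and
(q^(ab) - 1)/(q^a + 1) ≥ 2^⌈log₂ b⌉ unless (q, a, b) = (2, 1, 2). -/
theorem pow_add_one_dvd_and_quot_ge_even (f q a b : ℕ) (hf : 1 ≤ f) (hq : q = 2 ^ f)
    (ha : 1 ≤ a) (hb : 1 ≤ b) (hbeven : Even b) :
    q ^ a + 1 ∣ q ^ (a * b) - 1 ∧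
      (¬(q = 2 ∧ a = 1 ∧ b = 2) →
        2 ^ Nat.clog 2 b ≤ (q ^ (a * b) - 1) / (q ^ a + 1)) := by
  obtain ⟨k, hk⟩ := hbeven
  have hb2 : b = 2 * k := by omega
  have hk1 : 1 ≤ k := by omega
  have hq2 : 2 ≤ q := by
    rw [hq]
    calc 2 = 2 ^ 1 := rfl
    _ ≤ 2 ^ f := Nat.pow_le_pow_right (by norm_num) hf
  set x := q ^ a with hx
  have hx2 : 2 ≤ x := by
    calc 2 = 2 ^ 1 := rfl
    _ ≤ q ^ 1 := by simpa using hq2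
    _ ≤ q ^ a := Nat.pow_le_pow_right (by omega) ha
  have hxb : q ^ (a * b) = x ^ b := by rw [hx, ← pow_mul]
  -- the key identity
  set S := ∑ i ∈ Finset.range k, (x ^ 2) ^ i with hS
  have hgeom : (x ^ 2 - 1) * S = x ^ b - 1 := by
    rw [hS, geom_nat (x ^ 2) (Nat.one_le_pow _ _ (by omega)) k, ← pow_mul, hb2, Nat.mul_comm]
  have hfact : (x + 1) * (x - 1) = x ^ 2 - 1 := by
    have : x * x = x ^ 2 := by ring
    cases x with
    | zero => omega
    | succ m => simp [pow_two]; ring_nf; omega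
  have hkey : (x + 1) * ((x - 1) * S) = x ^ b - 1 := by
    rw [← Nat.mul_assoc, hfact, hgeom]
  have hdvd : x + 1 ∣ x ^ b - 1 := ⟨(x - 1) * S, hkey.symm⟩
  have hquot : (x ^ b - 1) / (x + 1) = (x - 1) * S := by
    rw [← hkey, Nat.mul_div_cancel_left _ (by omega)]
  refine ⟨by rw [hxb]; exact hdvd, ?_⟩
  intro hne
  rw [hxb, hquot]
  have hSge : (x ^ 2) ^ (k - 1) ≤ S := by
    rw [hS]
    exact Finset.single_le_sum (f := fun i => (x ^ 2) ^ i)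
      (fun i _ => Nat.zero_le _) (Finset.mem_range.mpr (by omega))
  rcases Nat.lt_or_ge b 4 with hbsmall | hbbig
  · -- b = 2, k = 1
    have hb2' : b = 2 := by omega
    have hk' : k = 1 := by omega
    have hx4 : 4 ≤ x := by
      rcases Nat.lt_or_ge f 2 with hf2 | hf2
      · have hf1 : f = 1 := by omega
        have hqe : q = 2 := by rw [hq, hf1]; rfl
        have ha2 : 2 ≤ a := by
          by_contra h
          push_neg at h
          exact hne ⟨hqe, by omega, hb2'⟩
        calc 4 = 2 ^ 2 := rfl
        _ ≤ 2 ^ a := Nat.pow_le_pow_right (by norm_num) ha2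
        _ = x := by rw [hx, hqe]
      · have hq4 : 4 ≤ q := by
          rw [hq]
          calc 4 = 2 ^ 2 := rfl
          _ ≤ 2 ^ f := Nat.pow_le_pow_right (by norm_num) hf2
        calc 4 ≤ q := hq4
        _ = q ^ 1 := (pow_one q).symm
        _ ≤ q ^ a := Nat.pow_le_pow_right (by omega) ha
    have hS1 : 1 ≤ S := by
      calc 1 = (x ^ 2) ^ (k - 1) := by simp [hk']
      _ ≤ S := hSge
    have hclog : Nat.clog 2 b = 1 := by rw [hb2']; simpa using Nat.clog_pow 2 1 (by norm_num)
    rw [hclog]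
    calc 2 ^ 1 = 2 := rfl
    _ ≤ (x - 1) * 1 := by omega
    _ ≤ (x - 1) * S := Nat.mul_le_mul_left _ hS1
  · -- b ≥ 4
    have hclog : Nat.clog 2 b ≤ b - 2 := by
      rw [Nat.clog_le_iff_le_pow (by norm_num)]
      exact le_two_pow_sub_two b hbbig
    calc 2 ^ Nat.clog 2 b ≤ 2 ^ (b - 2) := Nat.pow_le_pow_right (by norm_num) hclog
    _ ≤ x ^ (b - 2) := Nat.pow_le_pow_left hx2 _
    _ = x ^ (2 * (k - 1)) := by congr 1; omega
    _ = (x ^ 2) ^ (k - 1) := by rw [pow_mul]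
    _ ≤ S := hSge
    _ = 1 * S := (Nat.one_mul S).symm
    _ ≤ (x - 1) * S := Nat.mul_le_mul_right _ (by omega)
end

section
/- Let m ≥ 1 be an integer and let q be a power of 2, and let M = max{ L_{m,q}(m', ℘) : m' ∈ {0, ..., m} and ℘ a signed partition of m - m' }. Then there exist m' ∈ {0, ..., m} and a signed partition ℘ = (d_1^{ε_1}, ..., d_ℓ^{ε_ℓ}) of m - m' whose parts d_i^{ε_i} are pairwise distinct (i.e. for i ≠ j one has (d_i, ε_i) ≠ (d_j, ε_j)) such that L_{m,q}(m', ℘) = M. -/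
/-- A signed partition of `n`: a list of parts `(d, ε)` with `d > 0`, where `ε = true`
encodes sign `+1` and `ε = false` encodes sign `-1`, the `d`'s summing to `n`. -/
def IsSignedPartition (n : ℕ) (P : List (ℕ × Bool)) : Prop :=
  (∀ p ∈ P, 0 < p.1) ∧ (P.map Prod.fst).sum = n

/-- The value `q^d - ε` associated to a signed part `(d, ε)`. -/
def partVal (q : ℕ) (p : ℕ × Bool) : ℕ :=
  if p.2 then q ^ p.1 - 1 else q ^ p.1 + 1

/-- `L_{m,q}(m', ℘) = 2^⌈log₂(2m')⌉ · lcm(q^{d₁} - ε₁, …, q^{d_ℓ} - ε_ℓ)`, with the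
conventions that the power of two is `1` when `m' = 0` and the empty lcm is `1`. -/
def Lfun (q mp : ℕ) (P : List (ℕ × Bool)) : ℕ :=
  2 ^ Nat.clog 2 (2 * mp) * (P.map (partVal q)).foldr Nat.lcm 1

lemma dvd_foldr_lcm (l : List ℕ) (a : ℕ) (ha : a ∈ l) : a ∣ l.foldr Nat.lcm 1 := by
  induction l with
  | nil => simp at ha
  | cons b t ih =>
    rcases List.mem_cons.mp ha with rfl | h
    · exact Nat.dvd_lcm_left _ _
    · exact (ih h).trans (Nat.dvd_lcm_right _ _)

lemma lcm_dvd_of_subset (l1 l2 : List ℕ) (h : ∀ a ∈ l1, a ∈ l2) :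
    l1.foldr Nat.lcm 1 ∣ l2.foldr Nat.lcm 1 := by
  induction l1 with
  | nil => exact one_dvd _
  | cons a t ih =>
    exact Nat.lcm_dvd (dvd_foldr_lcm _ _ (h a (by simp)))
      (ih fun x hx => h x (by simp [hx]))

/-- Claim 1 in the proof of Theorem 2.2: the maximum M of L_m,q(m', ℘) is attained
at some m' and some signed partition ℘ of m - m' with pairwise distinct parts. -/
theorem max_Lfun_attained_with_distinct_parts (f q m M : ℕ) (hf : 1 ≤ f) (hq : q = 2 ^ f)
    (hm : 1 ≤ m)
    (hM : IsGreatest {L : ℕ | ∃ mp ≤ m, ∃ P : List (ℕ × Bool),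
      IsSignedPartition (m - mp) P ∧ Lfun q mp P = L} M) :
    ∃ mp ≤ m, ∃ P : List (ℕ × Bool), IsSignedPartition (m - mp) P ∧ P.Nodup ∧
      Lfun q mp P = M := by
  obtain ⟨⟨mp, hmp, P, hP, hL⟩, hub⟩ := hM
  -- consider the dedup of P
  set Q := P.dedup with hQ
  have hsub : Q.Sublist P := P.dedup_sublist
  have hsum : (Q.map Prod.fst).sum ≤ (P.map Prod.fst).sum :=
    (hsub.map Prod.fst).sum_le_sum (by simp)
  set n := (Q.map Prod.fst).sum with hn
  have hn_le : n ≤ m - mp := hP.2 ▸ hsum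
  have hn_le_m : n ≤ m := hn_le.trans (Nat.sub_le _ _)
  refine ⟨m - n, Nat.sub_le _ _, Q, ⟨fun p hp => hP.1 p (List.mem_dedup.mp hp),
    by rw [Nat.sub_sub_self hn_le_m]⟩, P.nodup_dedup, ?_⟩
  -- lcm is the same
  have hlcm : (Q.map (partVal q)).foldr Nat.lcm 1 = (P.map (partVal q)).foldr Nat.lcm 1 := by
    apply Nat.dvd_antisymm
    · exact lcm_dvd_of_subset _ _ (by
        intro a ha
        simp only [List.mem_map] at ha ⊢
        obtain ⟨p, hp, rfl⟩ := ha
        exact ⟨p, List.mem_dedup.mp hp, rfl⟩)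
    · exact lcm_dvd_of_subset _ _ (by
        intro a ha
        simp only [List.mem_map] at ha ⊢
        obtain ⟨p, hp, rfl⟩ := ha
        exact ⟨p, List.mem_dedup.mpr hp, rfl⟩)
  -- Lfun q (m-n) Q ≥ Lfun q mp P = M, and ≤ M by membership
  have hmem : Lfun q (m - n) Q ∈ {L : ℕ | ∃ mp ≤ m, ∃ P : List (ℕ × Bool),
      IsSignedPartition (m - mp) P ∧ Lfun q mp P = L} :=
    ⟨m - n, Nat.sub_le _ _, Q, ⟨fun p hp => hP.1 p (List.mem_dedup.mp hp),
      by rw [Nat.sub_sub_self hn_le_m]⟩, rfl⟩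
  have hle : Lfun q (m - n) Q ≤ M := hub hmem
  have hge : M ≤ Lfun q (m - n) Q := by
    rw [← hL]
    unfold Lfun
    rw [hlcm]
    apply Nat.mul_le_mul_right
    apply Nat.pow_le_pow_right (by norm_num)
    apply Nat.clog_mono_right
    have : mp ≤ m - n := by omega
    omega
  omega
end

section
/- Let m ≥ 1 be an integer and let q be a power of 2, and let M = max{ L_{m,q}(m', ℘) : m' ∈ {0, ..., m} and ℘ a signed partition of m - m' }. If m' ∈ {0, ..., m} and ℘ is a signed partition of m - m' with L_{m,q}(m', ℘) = M, then m' = 0 when q > 2, and m' ≤ 3 when q = 2. -/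
namespace Claim2Aux

/-- `x+1 ∣ x^(2k+1)+1` over ℤ. -/
lemma int_add_one_dvd_odd_pow (x : ℤ) (k : ℕ) : (x + 1) ∣ x ^ (2 * k + 1) + 1 := by
  induction k with
  | zero => exact ⟨1, by ring⟩
  | succ k ih =>
      have h : x ^ (2 * (k + 1) + 1) + 1 =
          x ^ 2 * (x ^ (2 * k + 1) + 1) - (x ^ 2 - 1) := by ring
      rw [h]
      exact dvd_sub (ih.mul_left _) ⟨x - 1, by ring⟩

/-- `q^a + 1 ∣ q^(a(2c+1)) + 1` in ℕ. -/
lemma pow_add_one_dvd (q a c : ℕ) : q ^ a + 1 ∣ q ^ (a * (2 * c + 1)) + 1 := by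
  have h := int_add_one_dvd_odd_pow ((q : ℤ) ^ a) c
  rw [show ((q : ℤ) ^ a) + 1 = ((q ^ a + 1 : ℕ) : ℤ) by push_cast; ring,
    show ((q : ℤ) ^ a) ^ (2 * c + 1) + 1 = ((q ^ (a * (2 * c + 1)) + 1 : ℕ) : ℤ) by
      push_cast [← pow_mul]; ring] at h
  exact_mod_cast h

lemma dvd_foldr_lcm {l : List ℕ} {x : ℕ} (hx : x ∈ l) : x ∣ l.foldr Nat.lcm 1 := by
  induction l with
  | nil => cases hx
  | cons a l ih =>
      rcases List.mem_cons.mp hx with rfl | h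
      · exact Nat.dvd_lcm_left _ _
      · exact (ih h).trans (Nat.dvd_lcm_right _ _)

lemma foldr_lcm_pos {l : List ℕ} (h : ∀ x ∈ l, 0 < x) : 0 < l.foldr Nat.lcm 1 := by
  induction l with
  | nil => norm_num
  | cons a l ih =>
      have ha := h a (List.mem_cons_self)
      have hl := ih fun x hx => h x (List.mem_cons_of_mem _ hx)
      exact Nat.pos_of_ne_zero (Nat.lcm_ne_zero ha.ne' hl.ne')

lemma coprime_foldr_lcm {v : ℕ} {l : List ℕ} (h : ∀ x ∈ l, Nat.Coprime v x) :
    Nat.Coprime v (l.foldr Nat.lcm 1) := by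
  induction l with
  | nil => exact Nat.coprime_one_right v
  | cons a l ih =>
      have ha := h a (List.mem_cons_self)
      have hl := ih fun x hx => h x (List.mem_cons_of_mem _ hx)
      have hdvd : Nat.lcm a (l.foldr Nat.lcm 1) ∣ a * l.foldr Nat.lcm 1 :=
        Nat.lcm_dvd (dvd_mul_right _ _) (dvd_mul_left _ _)
      exact Nat.Coprime.coprime_dvd_right hdvd (ha.mul_right hl)

/-- `q^(2^s) + 1 ∣ q^(2^t) - 1` for `s < t`. -/
lemma fermat_dvd (q s t : ℕ) (hst : s < t) : q ^ 2 ^ s + 1 ∣ q ^ 2 ^ t - 1 := by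
  have key : ∀ x : ℕ, (x + 1) * (x - 1) = x * x - 1 := by
    intro x
    cases x with
    | zero => simp
    | succ n => simp only [Nat.succ_sub_one]; ring_nf; omega
  have h1 : q ^ 2 ^ s + 1 ∣ q ^ 2 ^ (s + 1) - 1 := by
    refine ⟨q ^ 2 ^ s - 1, ?_⟩
    rw [key, ← pow_add, show 2 ^ s + 2 ^ s = 2 ^ (s + 1) by rw [pow_succ]; omega]
  have h2 : q ^ 2 ^ (s + 1) - 1 ∣ q ^ 2 ^ t - 1 := by
    have := Nat.sub_dvd_pow_sub_pow (q ^ 2 ^ (s + 1)) 1 (2 ^ (t - s - 1))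
    rw [one_pow, ← pow_mul, ← pow_add] at this
    have he : 2 ^ (s + 1) * 2 ^ (t - s - 1) = 2 ^ t := by
      rw [← pow_add]; congr 1; omega
    rwa [show s + 1 + (t - s - 1) = t by omega] at this
  exact h1.trans h2

/-- distinct Fermat-type numbers are coprime for even `q`. -/
lemma fermat_coprime (q s t : ℕ) (hq : 2 ∣ q) (hqpos : 0 < q) (hst : s < t) :
    Nat.Coprime (q ^ 2 ^ t + 1) (q ^ 2 ^ s + 1) := by
  have hpos : 1 ≤ q ^ 2 ^ t := Nat.one_le_pow _ _ hqpos
  set g := Nat.gcd (q ^ 2 ^ t + 1) (q ^ 2 ^ s + 1) with hg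
  have hg1 : g ∣ q ^ 2 ^ t + 1 := Nat.gcd_dvd_left _ _
  have hg2 : g ∣ q ^ 2 ^ t - 1 := (Nat.gcd_dvd_right _ _).trans (fermat_dvd q s t hst)
  have hg3 : g ∣ 2 := by
    have := Nat.dvd_sub hg1 hg2
    rwa [show q ^ 2 ^ t + 1 - (q ^ 2 ^ t - 1) = 2 by omega] at this
  have hodd : ¬ 2 ∣ q ^ 2 ^ s + 1 := by
    have : 2 ∣ q ^ 2 ^ s := dvd_pow hq (Nat.pos_of_ne_zero (by positivity)).ne'
    omega
  rcases (Nat.dvd_prime Nat.prime_two).mp hg3 with h | h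
  · exact h
  · have h2 := Nat.gcd_dvd_right (q ^ 2 ^ t + 1) (q ^ 2 ^ s + 1)
    rw [← hg, h] at h2
    exact absurd h2 hodd

lemma sum_range_two_pow (k : ℕ) : ∑ t ∈ Finset.range k, 2 ^ t = 2 ^ k - 1 := by
  induction k with
  | zero => simp
  | succ k ih =>
      rw [Finset.sum_range_succ, ih]
      have : 1 ≤ 2 ^ k := Nat.one_le_two_pow
      have h2 : (2:ℕ) ^ (k + 1) = 2 ^ k + 2 ^ k := by rw [pow_succ]; ring
      omega

end Claim2Aux
namespace Claim2Aux

/-- Lemma B: product of Fermat-type factors over a level set `S`. -/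
lemma prodB (q : ℕ) (hq : 2 ≤ q) :
    ∀ (k : ℕ) (S : Finset ℕ), S ⊆ Finset.range k →
      (q - 1) * (∏ t ∈ S, (q ^ 2 ^ t + 1)) + 1 ≤ q ^ ((∑ t ∈ S, 2 ^ t) + 1) := by
  intro k
  induction k with
  | zero =>
      intro S hS
      have hSe : S = ∅ := Finset.subset_empty.mp (by simpa using hS)
      subst hSe
      simp only [Finset.prod_empty, Finset.sum_empty, mul_one, zero_add, pow_one]
      omega
  | succ k ih =>
      intro S hS
      by_cases hk : k ∈ S
      · have hS' : S.erase k ⊆ Finset.range k := by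
          intro t ht
          have h1 := Finset.mem_of_mem_erase ht
          have h2 := Finset.ne_of_mem_erase ht
          have := Finset.mem_range.mp (hS h1)
          exact Finset.mem_range.mpr (by omega)
        have hIH := ih (S.erase k) hS'
        have hsum : ∑ t ∈ S, 2 ^ t = 2 ^ k + ∑ t ∈ S.erase k, 2 ^ t :=
          (Finset.add_sum_erase S (fun t => 2 ^ t) hk).symm
        have hprod : ∏ t ∈ S, (q ^ 2 ^ t + 1)
            = (q ^ 2 ^ k + 1) * ∏ t ∈ S.erase k, (q ^ 2 ^ t + 1) :=
          (Finset.mul_prod_erase S (fun t => q ^ 2 ^ t + 1) hk).symm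
        have hN' : (∑ t ∈ S.erase k, 2 ^ t) + 1 ≤ 2 ^ k := by
          have h1 : ∑ t ∈ S.erase k, 2 ^ t ≤ ∑ t ∈ Finset.range k, 2 ^ t :=
            Finset.sum_le_sum_of_subset hS'
          rw [sum_range_two_pow] at h1
          have : 1 ≤ (2:ℕ) ^ k := Nat.one_le_two_pow
          omega
        set N' := ∑ t ∈ S.erase k, 2 ^ t with hN'def
        set A := ∏ t ∈ S.erase k, (q ^ 2 ^ t + 1) with hA
        set X := q ^ (N' + 1) with hX
        set Y := q ^ 2 ^ k with hY
        have hXY : X ≤ Y := Nat.pow_le_pow_right (by omega) hN'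
        have hgoal : q ^ ((∑ t ∈ S, 2 ^ t) + 1) = Y * X := by
          have he : (∑ t ∈ S, 2 ^ t) + 1 = 2 ^ k + (N' + 1) := by omega
          rw [he, hX, hY, ← pow_add]
        rw [hgoal, hprod]
        set B := (q - 1) * A with hB
        have hBX : B + 1 ≤ X := hIH
        calc (q - 1) * ((Y + 1) * A) + 1 = B * Y + (B + 1) := by rw [hB]; ring
          _ ≤ B * Y + Y := Nat.add_le_add_left (hBX.trans hXY) _
          _ = (B + 1) * Y := by ring
          _ ≤ X * Y := Nat.mul_le_mul_right _ hBX
          _ = Y * X := by ring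
      · refine ih S (fun t ht => ?_)
        have h1 := Finset.mem_range.mp (hS ht)
        have h2 : t ≠ k := fun h => hk (h ▸ ht)
        exact Finset.mem_range.mpr (by omega)

end Claim2Aux
namespace Claim2Aux

lemma partVal_pos {q : ℕ} (hq : 2 ≤ q) {p : ℕ × Bool} (hp : 0 < p.1) : 0 < partVal q p := by
  unfold partVal
  split
  · have : 2 ≤ q ^ p.1 := by
      calc 2 = 2 ^ 1 := rfl
        _ ≤ q ^ p.1 := Nat.pow_le_pow_left hq 1 |>.trans (Nat.pow_le_pow_right (by omega) hp)
    omega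
  · omega

lemma lemA (q : ℕ) (hq : 2 ≤ q) :
    ∀ (P : List (ℕ × Bool)), (∀ p ∈ P, 0 < p.1) → ∃ S : Finset ℕ,
      (∀ t ∈ S, ∃ p ∈ P, p.2 = false ∧ 2 ^ t ∣ p.1 ∧ ¬ 2 ^ (t + 1) ∣ p.1) ∧
      (∑ t ∈ S, 2 ^ t) ≤ (P.map Prod.fst).sum ∧
      ((P.map (partVal q)).foldr Nat.lcm 1) * q ^ (∑ t ∈ S, 2 ^ t) ≤
        q ^ ((P.map Prod.fst).sum) * (∏ t ∈ S, (q ^ 2 ^ t + 1)) := by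
  intro P
  induction P with
  | nil => exact fun _ => ⟨∅, by simp, by simp, by simp⟩
  | cons p P ih =>
      intro hpos
      obtain ⟨S', hwit, hsum, hbound⟩ := ih fun x hx => hpos x (List.mem_cons_of_mem _ hx)
      obtain ⟨d, ε⟩ := p
      have hd : 0 < d := hpos (d, ε) (List.mem_cons_self)
      set L' := (P.map (partVal q)).foldr Nat.lcm 1 with hL'
      set n' := (P.map Prod.fst).sum with hn'
      set N' := ∑ t ∈ S', 2 ^ t with hN'
      have hL'pos : 0 < L' := foldr_lcm_pos (by
        intro x hx
        obtain ⟨y, hy, rfl⟩ := List.mem_map.mp hx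
        exact partVal_pos hq (hpos y (List.mem_cons_of_mem _ hy)))
      have hcons_sum : (((d, ε) :: P).map Prod.fst).sum = d + n' := by simp [hn']
      have hcons_val : (((d, ε) :: P).map (partVal q)).foldr Nat.lcm 1
          = Nat.lcm (partVal q (d, ε)) L' := by simp [hL']
      -- generic finisher: if lcm ≤ q^d * L' we can keep S'
      have finisher : Nat.lcm (partVal q (d, ε)) L' ≤ q ^ d * L' → ∃ S : Finset ℕ,
          (∀ t ∈ S, ∃ p ∈ (d, ε) :: P, p.2 = false ∧ 2 ^ t ∣ p.1 ∧ ¬ 2 ^ (t + 1) ∣ p.1) ∧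
          (∑ t ∈ S, 2 ^ t) ≤ (((d, ε) :: P).map Prod.fst).sum ∧
          ((((d, ε) :: P).map (partVal q)).foldr Nat.lcm 1) * q ^ (∑ t ∈ S, 2 ^ t) ≤
            q ^ ((((d, ε) :: P).map Prod.fst).sum) * (∏ t ∈ S, (q ^ 2 ^ t + 1)) := by
        intro hle
        refine ⟨S', ?_, ?_, ?_⟩
        · intro t ht
          obtain ⟨x, hxP, hx2, hx3, hx4⟩ := hwit t ht
          exact ⟨x, List.mem_cons_of_mem _ hxP, hx2, hx3, hx4⟩
        · rw [hcons_sum]; omega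
        · rw [hcons_sum, hcons_val]
          calc Nat.lcm (partVal q (d, ε)) L' * q ^ N' ≤ (q ^ d * L') * q ^ N' :=
                Nat.mul_le_mul_right _ hle
            _ = q ^ d * (L' * q ^ N') := by ring
            _ ≤ q ^ d * (q ^ n' * ∏ t ∈ S', (q ^ 2 ^ t + 1)) := Nat.mul_le_mul_left _ hbound
            _ = q ^ (d + n') * ∏ t ∈ S', (q ^ 2 ^ t + 1) := by rw [pow_add]; ring
      by_cases hε : ε = true
      · subst hε
        apply finisher
        have hval : partVal q (d, true) = q ^ d - 1 := by simp [partVal]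
        have hlcm_le : Nat.lcm (partVal q (d, true)) L' ≤ partVal q (d, true) * L' :=
          Nat.le_of_dvd (Nat.mul_pos (partVal_pos hq hd) hL'pos)
            (Nat.lcm_dvd (dvd_mul_right _ _) (dvd_mul_left _ _))
        calc Nat.lcm (partVal q (d, true)) L' ≤ partVal q (d, true) * L' := hlcm_le
          _ ≤ q ^ d * L' := Nat.mul_le_mul_right _ (by rw [hval]; omega)
      · have hεf : ε = false := by simpa using hε
        subst hεf
        have hval : partVal q (d, false) = q ^ d + 1 := by simp [partVal]
        set t := d.factorization 2 with ht
        have h2t : 2 ^ t ∣ d := Nat.ordProj_dvd d 2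
        have h2t' : ¬ 2 ^ (t + 1) ∣ d := Nat.pow_succ_factorization_not_dvd hd.ne' Nat.prime_two
        have h2td : 2 ^ t ≤ d := Nat.le_of_dvd hd h2t
        by_cases htS : t ∈ S'
        · -- gcd with an existing same-level part gives a factor q^e+1
          apply finisher
          obtain ⟨p', hp'P, hp'f, hdvd', hndvd'⟩ := hwit t htS
          have hd' : 0 < p'.1 := hpos p' (List.mem_cons_of_mem _ hp'P)
          set e := Nat.gcd d p'.1 with he
          have hed : e ∣ d := Nat.gcd_dvd_left _ _
          have hed' : e ∣ p'.1 := Nat.gcd_dvd_right _ _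
          have hepos : 0 < e := Nat.gcd_pos_of_pos_left _ hd
          have h2te : 2 ^ t ∣ e := Nat.dvd_gcd h2t hdvd'
          have hodd : ¬ 2 ∣ d / e := by
            intro h2
            apply h2t'
            have : 2 ^ t * 2 ∣ e * (d / e) := mul_dvd_mul h2te h2
            rwa [Nat.mul_div_cancel' hed, ← pow_succ] at this
          have hodd' : ¬ 2 ∣ p'.1 / e := by
            intro h2
            apply hndvd'
            have : 2 ^ t * 2 ∣ e * (p'.1 / e) := mul_dvd_mul h2te h2
            rwa [Nat.mul_div_cancel' hed', ← pow_succ] at this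
          obtain ⟨k, hk⟩ : ∃ k, d / e = 2 * k + 1 := by
            rcases Nat.even_or_odd (d / e) with h | h
            · exact absurd h.two_dvd hodd
            · exact h
          obtain ⟨k', hk'⟩ : ∃ k', p'.1 / e = 2 * k' + 1 := by
            rcases Nat.even_or_odd (p'.1 / e) with h | h
            · exact absurd h.two_dvd hodd'
            · exact h
          have hde : d = e * (2 * k + 1) := by rw [← hk, Nat.mul_div_cancel' hed]
          have hde' : p'.1 = e * (2 * k' + 1) := by rw [← hk', Nat.mul_div_cancel' hed']
          have hdvd_v : q ^ e + 1 ∣ partVal q (d, false) := by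
            rw [hval, hde]; exact pow_add_one_dvd q e k
          have hdvd_v' : q ^ e + 1 ∣ partVal q p' := by
            have : partVal q p' = q ^ p'.1 + 1 := by
              unfold partVal; rw [hp'f]; simp
            rw [this, hde']; exact pow_add_one_dvd q e k'
          have hvL : partVal q p' ∣ L' := dvd_foldr_lcm (List.mem_map_of_mem (f := partVal q) hp'P)
          have hgd : q ^ e + 1 ∣ Nat.gcd (partVal q (d, false)) L' :=
            Nat.dvd_gcd hdvd_v (hdvd_v'.trans hvL)
          have hgpos : 0 < Nat.gcd (partVal q (d, false)) L' :=
            Nat.gcd_pos_of_pos_right _ hL'pos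
          have hqe1 : 0 < q ^ e + 1 := by positivity
          have key : Nat.lcm (partVal q (d, false)) L' * (q ^ e + 1) ≤ (q ^ d * L') * (q ^ e + 1) := by
            calc Nat.lcm (partVal q (d, false)) L' * (q ^ e + 1)
                ≤ Nat.lcm (partVal q (d, false)) L' * Nat.gcd (partVal q (d, false)) L' :=
                  Nat.mul_le_mul_left _ (Nat.le_of_dvd hgpos hgd)
              _ = partVal q (d, false) * L' := by rw [mul_comm, Nat.gcd_mul_lcm]
              _ = (q ^ d + 1) * L' := by rw [hval]
              _ ≤ (q ^ d * (q ^ e + 1)) * L' := by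
                  have : q ^ d + 1 ≤ q ^ d * (q ^ e + 1) := by
                    have h1 : 1 ≤ q ^ e := Nat.one_le_pow _ _ (by omega)
                    have h2 : q ^ d * (q ^ e + 1) = q ^ d * q ^ e + q ^ d := by ring
                    have h3 : 1 ≤ q ^ d := Nat.one_le_pow _ _ (by omega)
                    nlinarith
                  exact Nat.mul_le_mul_right _ this
              _ = (q ^ d * L') * (q ^ e + 1) := by ring
          exact Nat.le_of_mul_le_mul_right key hqe1
        · -- new level: S = insert t S'
          refine ⟨insert t S', ?_, ?_, ?_⟩
          · intro s hs
            rcases Finset.mem_insert.mp hs with rfl | hs'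
            · exact ⟨(d, false), List.mem_cons_self, rfl, h2t, h2t'⟩
            · obtain ⟨x, hxP, hx2, hx3, hx4⟩ := hwit s hs'
              exact ⟨x, List.mem_cons_of_mem _ hxP, hx2, hx3, hx4⟩
          · rw [hcons_sum, Finset.sum_insert htS]
            omega
          · rw [hcons_sum, hcons_val, Finset.sum_insert htS, Finset.prod_insert htS]
            have hlcm_le : Nat.lcm (partVal q (d, false)) L' ≤ (q ^ d + 1) * L' := by
              rw [← hval]
              exact Nat.le_of_dvd (Nat.mul_pos (partVal_pos hq hd) hL'pos)
                (Nat.lcm_dvd (dvd_mul_right _ _) (dvd_mul_left _ _))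
            have hkey : (q ^ d + 1) * q ^ 2 ^ t ≤ q ^ d * (q ^ 2 ^ t + 1) := by
              have h1 : q ^ 2 ^ t ≤ q ^ d := Nat.pow_le_pow_right (by omega) h2td
              have h2 : (q ^ d + 1) * q ^ 2 ^ t = q ^ d * q ^ 2 ^ t + q ^ 2 ^ t := by ring
              have h3 : q ^ d * (q ^ 2 ^ t + 1) = q ^ d * q ^ 2 ^ t + q ^ d := by ring
              omega
            calc Nat.lcm (partVal q (d, false)) L' * q ^ (2 ^ t + N')
                ≤ ((q ^ d + 1) * L') * q ^ (2 ^ t + N') := Nat.mul_le_mul_right _ hlcm_le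
              _ = ((q ^ d + 1) * q ^ 2 ^ t) * (L' * q ^ N') := by rw [pow_add]; ring
              _ ≤ (q ^ d * (q ^ 2 ^ t + 1)) * (L' * q ^ N') := Nat.mul_le_mul_right _ hkey
              _ ≤ (q ^ d * (q ^ 2 ^ t + 1)) * (q ^ n' * ∏ s ∈ S', (q ^ 2 ^ s + 1)) :=
                  Nat.mul_le_mul_left _ hbound
              _ = q ^ (d + n') * ((q ^ 2 ^ t + 1) * ∏ s ∈ S', (q ^ 2 ^ s + 1)) := by
                  rw [pow_add]; ring

end Claim2Aux
namespace Claim2Aux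

/-- Upper bound: `lcm·(q-1) + 1 ≤ q^(n+1)` for a signed partition of `n`. -/
lemma lemU (q : ℕ) (hq : 2 ≤ q) (P : List (ℕ × Bool)) (hpos : ∀ p ∈ P, 0 < p.1) :
    ((P.map (partVal q)).foldr Nat.lcm 1) * (q - 1) + 1 ≤ q ^ ((P.map Prod.fst).sum + 1) := by
  obtain ⟨S, hwit, hsum, hbound⟩ := lemA q hq P hpos
  set n := (P.map Prod.fst).sum with hn
  set N := ∑ t ∈ S, 2 ^ t with hN
  set L := (P.map (partVal q)).foldr Nat.lcm 1 with hLdef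
  have hSrange : S ⊆ Finset.range (n + 1) := by
    intro t ht
    have h1 : 2 ^ t ≤ N := Finset.single_le_sum (fun i _ => Nat.zero_le _) ht
    have h2 : t < 2 ^ t := Nat.lt_two_pow_self
    exact Finset.mem_range.mpr (by omega)
  have hB := prodB q hq (n + 1) S hSrange
  set Pr := ∏ t ∈ S, (q ^ 2 ^ t + 1) with hPr
  have hqN : 0 < q ^ N := Nat.pow_pos (by omega)
  have hchain : (L * (q - 1) + 1) * q ^ N ≤ q ^ (n + 1) * q ^ N := by
    have c1 : (L * (q - 1) + 1) * q ^ N = (L * q ^ N) * (q - 1) + q ^ N := by ring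
    have c2 : (L * q ^ N) * (q - 1) ≤ (q ^ n * Pr) * (q - 1) := Nat.mul_le_mul_right _ hbound
    have c3 : q ^ N ≤ q ^ n := Nat.pow_le_pow_right (by omega) hsum
    have c4 : (q ^ n * Pr) * (q - 1) + q ^ n = q ^ n * ((q - 1) * Pr + 1) := by ring
    have c5 : q ^ n * ((q - 1) * Pr + 1) ≤ q ^ n * q ^ (N + 1) := Nat.mul_le_mul_left _ hB
    have c6 : q ^ n * q ^ (N + 1) = q ^ (n + 1) * q ^ N := by
      rw [← pow_add, ← pow_add]
      congr 1
      omega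
    omega
  exact Nat.le_of_mul_le_mul_right hchain hqN

/-- Lower bound construction from the binary representation. -/
lemma construct (q : ℕ) (hq : 2 ≤ q) (hqe : 2 ∣ q) :
    ∀ m : ℕ, ∃ Q : List (ℕ × Bool),
      IsSignedPartition m Q ∧ (∀ p ∈ Q, p.2 = false ∧ ∃ s : ℕ, p.1 = 2 ^ s) ∧
      q ^ m ≤ (Q.map (partVal q)).foldr Nat.lcm 1 ∧
      (0 < m → q ^ m < (Q.map (partVal q)).foldr Nat.lcm 1) := by
  intro m
  induction m using Nat.strong_induction_on with
  | _ m ih =>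
    rcases Nat.eq_zero_or_pos m with rfl | hm
    · exact ⟨[], ⟨by simp, by simp⟩, by simp, by simp, by simp⟩
    · set t := Nat.log 2 m with htdef
      have ht1 : 2 ^ t ≤ m := Nat.pow_log_le_self 2 hm.ne'
      have ht2 : m < 2 ^ (t + 1) := Nat.lt_pow_succ_log_self (by norm_num) m
      have ht2' : m < 2 ^ t + 2 ^ t := by
        have h : (2:ℕ) ^ (t + 1) = 2 ^ t + 2 ^ t := by rw [pow_succ]; ring
        omega
      set m' := m - 2 ^ t with hm'def
      have h2tpos : 0 < (2:ℕ) ^ t := Nat.pow_pos (by norm_num)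
      have hm'lt : m' < m := by omega
      obtain ⟨Q', hQ'part, hQ'shape, hQ'ge, _⟩ := ih m' hm'lt
      set L' := (Q'.map (partVal q)).foldr Nat.lcm 1 with hL'
      have hv : partVal q (2 ^ t, false) = q ^ 2 ^ t + 1 := by simp [partVal]
      have hL'pos : 0 < L' := by
        have := hQ'ge
        have hqm' : 0 < q ^ m' := Nat.pow_pos (by omega)
        omega
      have hcop : Nat.Coprime (partVal q (2 ^ t, false)) L' := by
        rw [hv]
        apply coprime_foldr_lcm
        intro x hx
        obtain ⟨y, hy, rfl⟩ := List.mem_map.mp hx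
        obtain ⟨hyf, s, hys⟩ := hQ'shape y hy
        have hsum' : (Q'.map Prod.fst).sum = m' := hQ'part.2
        have hy1 : y.1 ≤ m' := by
          have hmem : y.1 ∈ Q'.map Prod.fst := List.mem_map_of_mem (f := Prod.fst) hy
          have := List.single_le_sum (l := Q'.map Prod.fst) (fun x _ => Nat.zero_le x) y.1 hmem
          omega
        have hst : s < t := by
          have h1 : (2:ℕ) ^ s < 2 ^ t := by omega
          exact (Nat.pow_lt_pow_iff_right (by norm_num)).mp h1
        have hyval : partVal q y = q ^ 2 ^ s + 1 := by
          unfold partVal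
          rw [hyf, hys]
          simp
        rw [hyval]
        exact fermat_coprime q s t hqe (by omega) hst
      have hlcm : Nat.lcm (partVal q (2 ^ t, false)) L' = (q ^ 2 ^ t + 1) * L' := by
        rw [hcop.lcm_eq_mul, hv]
      refine ⟨(2 ^ t, false) :: Q', ⟨?_, ?_⟩, ?_, ?_, ?_⟩
      · intro p hp
        rcases List.mem_cons.mp hp with rfl | hp'
        · exact h2tpos
        · exact hQ'part.1 p hp'
      · simp only [List.map_cons, List.sum_cons]
        rw [hQ'part.2]
        omega
      · intro p hp
        rcases List.mem_cons.mp hp with rfl | hp'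
        · exact ⟨rfl, t, rfl⟩
        · exact hQ'shape p hp'
      · simp only [List.map_cons, List.foldr_cons]
        rw [hlcm]
        have h1 : q ^ m = q ^ 2 ^ t * q ^ m' := by rw [← pow_add]; congr 1; omega
        calc q ^ m = q ^ 2 ^ t * q ^ m' := h1
          _ ≤ q ^ 2 ^ t * L' := Nat.mul_le_mul_left _ hQ'ge
          _ ≤ (q ^ 2 ^ t + 1) * L' := Nat.mul_le_mul_right _ (by omega)
      · intro _
        simp only [List.map_cons, List.foldr_cons]
        rw [hlcm]
        have h1 : q ^ m = q ^ 2 ^ t * q ^ m' := by rw [← pow_add]; congr 1; omega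
        have h2 : q ^ 2 ^ t * q ^ m' ≤ q ^ 2 ^ t * L' := Nat.mul_le_mul_left _ hQ'ge
        have h3 : (q ^ 2 ^ t + 1) * L' = q ^ 2 ^ t * L' + L' := by ring
        omega

end Claim2Aux
namespace Claim2Aux

lemma two_mul_le_pow (k : ℕ) (hk : 4 ≤ k) : 2 * k ≤ 2 ^ (k - 1) := by
  obtain ⟨j, rfl⟩ : ∃ j, k = j + 4 := ⟨k - 4, by omega⟩
  have h : ∀ j : ℕ, 2 * (j + 4) ≤ 2 ^ (j + 3) := by
    intro j
    induction j with
    | zero => norm_num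
    | succ j ih =>
        have h1 : (2:ℕ) ^ (j + 1 + 3) = 2 ^ (j + 3) + 2 ^ (j + 3) := by
          rw [show j + 1 + 3 = (j + 3) + 1 by omega, pow_succ]; ring
        have h2 : (2:ℕ) ≤ 2 ^ (j + 3) := by
          calc (2:ℕ) = 2 ^ 1 := rfl
            _ ≤ 2 ^ (j + 3) := Nat.pow_le_pow_right (by norm_num) (by omega)
        omega
  have := h j
  rw [show j + 4 - 1 = j + 3 by omega]
  omega

lemma core {f q m M : ℕ} (hf : 1 ≤ f) (hq : q = 2 ^ f) (hm : 1 ≤ m)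
    (hM : IsGreatest {L : ℕ | ∃ mp ≤ m, ∃ P : List (ℕ × Bool),
      IsSignedPartition (m - mp) P ∧ Lfun q mp P = L} M)
    (mp : ℕ) (hmp1 : 1 ≤ mp) (hmp : mp ≤ m) (P : List (ℕ × Bool))
    (hP : IsSignedPartition (m - mp) P) (hL : Lfun q mp P = M)
    (h2 : 2 ^ Nat.clog 2 (2 * mp) ≤ (q - 1) * q ^ (mp - 1)) : False := by
  have hq2 : 2 ≤ q := by
    rw [hq]
    calc (2:ℕ) = 2 ^ 1 := rfl
      _ ≤ 2 ^ f := Nat.pow_le_pow_right (by norm_num) hf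
  have hqe : 2 ∣ q := by rw [hq]; exact dvd_pow_self 2 (by omega)
  obtain ⟨Q, hQpart, _, _, hQlt⟩ := construct q hq2 hqe m
  set LQ := (Q.map (partVal q)).foldr Nat.lcm 1 with hLQ
  have hQmem : Lfun q 0 Q ∈ {L : ℕ | ∃ mp ≤ m, ∃ P : List (ℕ × Bool),
      IsSignedPartition (m - mp) P ∧ Lfun q mp P = L} :=
    ⟨0, Nat.zero_le m, Q, by simpa using hQpart, rfl⟩
  have hQle : Lfun q 0 Q ≤ M := hM.2 hQmem
  have hLf0 : Lfun q 0 Q = LQ := by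
    simp [Lfun, Nat.clog_zero_right, hLQ]
  set l := (P.map (partVal q)).foldr Nat.lcm 1 with hl
  set D := 2 ^ Nat.clog 2 (2 * mp) with hD
  have hMval : D * l = M := by
    rw [← hL]
    simp only [Lfun, hD, hl]
  set n := (P.map Prod.fst).sum with hn
  have hnval : n = m - mp := hP.2
  have hU : l * (q - 1) + 1 ≤ q ^ (n + 1) := lemU q hq2 P hP.1
  set A := q ^ m with hA
  set B := q ^ (mp - 1) with hB
  set C := q ^ (n + 1) with hC
  have hBC : B * C = A := by
    rw [hB, hC, hA, ← pow_add]
    congr 1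
    omega
  have hAD : A + 1 ≤ D * l := by
    have h1 : A < LQ := hQlt hm
    omega
  have s1 : (A + 1) * (q - 1) ≤ (D * l) * (q - 1) := Nat.mul_le_mul_right _ hAD
  have s4 : D * (l * (q - 1) + 1) ≤ D * C := Nat.mul_le_mul_left _ hU
  have s5 : D * C ≤ ((q - 1) * B) * C := Nat.mul_le_mul_right _ h2
  have hfin : A * (q - 1) + (q - 1) + D ≤ A * (q - 1) := by
    calc A * (q - 1) + (q - 1) + D = (A + 1) * (q - 1) + D := by ring
      _ ≤ (D * l) * (q - 1) + D := Nat.add_le_add_right s1 _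
      _ = D * (l * (q - 1) + 1) := by ring
      _ ≤ D * C := s4
      _ ≤ ((q - 1) * B) * C := s5
      _ = (B * C) * (q - 1) := by ring
      _ = A * (q - 1) := by rw [hBC]
  have hD1 : 1 ≤ D := Nat.one_le_two_pow
  omega

end Claim2Aux


/-- Claim 2 in the proof of Theorem 2.2: if L_m,q(m', ℘) attains the maximum M, then
m' = 0 when q > 2, and m' ≤ 3 when q = 2. -/
theorem max_Lfun_small_mp (f q m M : ℕ) (hf : 1 ≤ f) (hq : q = 2 ^ f) (hm : 1 ≤ m)
    (hM : IsGreatest {L : ℕ | ∃ mp ≤ m, ∃ P : List (ℕ × Bool),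
      IsSignedPartition (m - mp) P ∧ Lfun q mp P = L} M)
    (mp : ℕ) (hmp : mp ≤ m) (P : List (ℕ × Bool)) (hP : IsSignedPartition (m - mp) P)
    (hL : Lfun q mp P = M) :
    (2 < q → mp = 0) ∧ (q = 2 → mp ≤ 3) := by
  constructor
  · intro hqbig
    by_contra hne
    have hmp1 : 1 ≤ mp := Nat.pos_of_ne_zero hne
    have hq4 : 4 ≤ q := by
      have hf2 : 2 ≤ f := by
        by_contra h
        have hf1 : f = 1 := by omega
        rw [hf1] at hq
        omega
      rw [hq]
      calc (4:ℕ) = 2 ^ 2 := rfl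
        _ ≤ 2 ^ f := Nat.pow_le_pow_right (by norm_num) hf2
    have h2 : 2 ^ Nat.clog 2 (2 * mp) ≤ (q - 1) * q ^ (mp - 1) := by
      have e0 : 2 * mp - 1 < 2 ^ (2 * mp - 1) := Nat.lt_two_pow_self
      have e1 : 2 * mp ≤ 2 ^ (2 * mp - 1) := by omega
      have e2 : Nat.clog 2 (2 * mp) ≤ 2 * mp - 1 :=
        (Nat.clog_le_iff_le_pow (by norm_num)).mpr e1
      have e3 : (2:ℕ) ^ Nat.clog 2 (2 * mp) ≤ 2 ^ (2 * mp - 1) :=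
        Nat.pow_le_pow_right (by norm_num) e2
      have e4 : (2:ℕ) ^ (2 * mp - 1) = 2 * 4 ^ (mp - 1) := by
        rw [show 2 * mp - 1 = 2 * (mp - 1) + 1 by omega, pow_succ, pow_mul]
        norm_num
        ring
      have e5 : (4:ℕ) ^ (mp - 1) ≤ q ^ (mp - 1) := Nat.pow_le_pow_left hq4 _
      have e6 : 2 * 4 ^ (mp - 1) ≤ (q - 1) * q ^ (mp - 1) :=
        Nat.mul_le_mul (by omega) e5
      omega
    exact Claim2Aux.core hf hq hm hM mp hmp1 hmp P hP hL h2
  · intro hq2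
    by_contra hgt
    have hmp4 : 4 ≤ mp := by omega
    have h2 : 2 ^ Nat.clog 2 (2 * mp) ≤ (q - 1) * q ^ (mp - 1) := by
      have e1 : 2 * mp ≤ 2 ^ (mp - 1) := Claim2Aux.two_mul_le_pow mp hmp4
      have e2 : Nat.clog 2 (2 * mp) ≤ mp - 1 :=
        (Nat.clog_le_iff_le_pow (by norm_num)).mpr e1
      have e3 : (2:ℕ) ^ Nat.clog 2 (2 * mp) ≤ 2 ^ (mp - 1) :=
        Nat.pow_le_pow_right (by norm_num) e2
      rw [hq2]
      norm_num
      exact e3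
    exact Claim2Aux.core hf hq hm hM mp (by omega) hmp P hP hL h2
end
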